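/- arXiv:1301.6579 — 10 statements merged into one kernel-verified Lean document; each statement's English description precedes it below -/
import Mathlib

section
/- If α < β are nonnegative integers and n is a nonnegative integer, then ∑_{k=0}^{n} (-1)^k C(n,k) / C(k+β, k+α) = ((β-α)/(β-α+n)) / C(β+n, α). -/
open Finset

lemma alt_pascal (f : ℕ → ℚ) (n : ℕ) :
    ∑ k ∈ range (n+2), (-1:ℚ)^k * ((n+1).choose k) * f k =
    ∑ k ∈ range (n+1), (-1:ℚ)^k * (n.choose k) * f k
    - ∑ k ∈ range (n+1), (-1:ℚ)^k * (n.choose k) * f (k+1) := by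
  rw [Finset.sum_range_succ' (fun k => (-1:ℚ)^k * ((n+1).choose k) * f k) (n+1)]
  rw [Finset.sum_range_succ' (fun k => (-1:ℚ)^k * (n.choose k) * f k) n]
  have hext : ∑ k ∈ range n, (-1:ℚ)^(k+1) * (n.choose (k+1)) * f (k+1)
      = ∑ k ∈ range (n+1), (-1:ℚ)^(k+1) * (n.choose (k+1)) * f (k+1) := by
    rw [Finset.sum_range_succ]
    simp [Nat.choose_succ_self]
  rw [hext]
  simp only [Nat.choose_succ_succ]
  rw [eq_sub_iff_add_eq, add_right_comm, ← Finset.sum_add_distrib]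
  congr 1
  · exact Finset.sum_congr rfl fun k _ => by push_cast; ring
  · simp

lemma key (p : ℕ) : ∀ (n α : ℕ),
    ∑ k ∈ range (n+1), (-1:ℚ)^k * (n.choose k) * (((k+α+p+1).choose (k+α) : ℚ))⁻¹ =
    ((p+1) * α.factorial * (p+n).factorial) / (α+p+n+1).factorial := by
  intro n
  induction n with
  | zero =>
    intro α
    rw [zero_add, Finset.sum_range_one]
    simp only [zero_add, Nat.add_zero]
    rw [Nat.cast_choose ℚ (by omega : α ≤ α+p+1)]
    have h1 : α+p+1-α = p+1 := by omega
    rw [h1]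
    have h3 : (α.factorial : ℚ) ≠ 0 := Nat.cast_ne_zero.mpr (Nat.factorial_ne_zero _)
    have h4 : ((p+1).factorial : ℚ) ≠ 0 := Nat.cast_ne_zero.mpr (Nat.factorial_ne_zero _)
    rw [Nat.factorial_succ p]
    field_simp
    push_cast
    simp only [Nat.choose_self, Nat.cast_one, one_mul]
  | succ n ih =>
    intro α
    have hstep := alt_pascal (fun k => (((k+α+p+1).choose (k+α) : ℚ))⁻¹) n
    rw [show n+1+1 = n+2 from rfl, hstep, ih α]
    have h5 : ∑ k ∈ range (n+1), (-1:ℚ)^k * (n.choose k) * (((k+1+α+p+1).choose (k+1+α) : ℚ))⁻¹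
        = ((p+1) * (α+1).factorial * (p+n).factorial) / ((α+1)+p+n+1).factorial := by
      rw [← ih (α+1)]
      apply Finset.sum_congr rfl
      intro k _
      have e1 : k+1+α+p+1 = k+(α+1)+p+1 := by omega
      have e2 : k+1+α = k+(α+1) := by omega
      rw [e1, e2]
    rw [h5]
    have h2 : ∀ m : ℕ, ((m).factorial : ℚ) ≠ 0 := fun m => Nat.cast_ne_zero.mpr (Nat.factorial_ne_zero _)
    rw [show α+1+p+n+1 = (α+p+n+1)+1 from by omega, Nat.factorial_succ (α+p+n+1),
        show p+(n+1) = (p+n)+1 from by omega, Nat.factorial_succ (p+n), Nat.factorial_succ α,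
        show α+p+(n+1)+1 = (α+p+n+1)+1 from by omega, Nat.factorial_succ (α+p+n+1)]
    rw [div_sub_div _ _ (h2 _) (by push_cast; positivity), div_eq_div_iff (by push_cast; positivity) (by push_cast; positivity)]
    push_cast
    ring

/-- If α < β then ∑_{k=0}^{n} (-1)^k C(n,k) / C(k+β, k+α)
    = ((β-α)/(β-α+n)) / C(β+n, α). -/
theorem stmt2 (α β n : ℕ) (h : α < β) :
    ∑ k ∈ range (n + 1),
      (-1 : ℚ) ^ k * (n.choose k : ℚ) / ((k + β).choose (k + α) : ℚ) =
    (((β : ℚ) - (α : ℚ)) / ((β : ℚ) - (α : ℚ) + (n : ℚ))) / ((β + n).choose α : ℚ) := by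
  obtain ⟨p, rfl⟩ : ∃ p, β = α + p + 1 := ⟨β - α - 1, by omega⟩
  have hL : ∑ k ∈ range (n + 1),
      (-1 : ℚ) ^ k * (n.choose k : ℚ) / ((k + (α+p+1)).choose (k + α) : ℚ)
      = ∑ k ∈ range (n+1), (-1:ℚ)^k * (n.choose k) * (((k+α+p+1).choose (k+α) : ℚ))⁻¹ := by
    apply Finset.sum_congr rfl
    intro k _
    rw [div_eq_mul_inv, show k+(α+p+1) = k+α+p+1 from by omega]
  rw [hL, key p n α]
  have hβα : ((α:ℚ)+(p:ℚ)+1) - (α:ℚ) = (p:ℚ)+1 := by ring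
  push_cast
  rw [hβα]
  rw [show α+p+1+n = α+(p+n+1) from by omega, Nat.cast_choose ℚ (by omega : α ≤ α+(p+n+1)),
      show α+(p+n+1)-α = p+n+1 from by omega,
      show α+(p+n+1) = α+p+n+1 from by omega,
      show p+n+1 = (p+n)+1 from rfl, Nat.factorial_succ (p+n)]
  have h2 : ∀ m : ℕ, ((m).factorial : ℚ) ≠ 0 := fun m => Nat.cast_ne_zero.mpr (Nat.factorial_ne_zero _)
  have hpn : ((p:ℚ)+1+(n:ℚ)) ≠ 0 := by positivity
  field_simp
  push_cast
  ring
end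

section
/- With the same setting, for every integer k, P{S_n ≤ k} = 𝟙_{k≥0} + (-1)^k ∑_{ℓ=1}^{n} (-c)^ℓ C(n,ℓ) C(2Nℓ - 1, k+Nℓ). -/
open Finset

/-- Binomial coefficient with integer lower argument. -/
def ichoose (n : ℕ) (k : ℤ) : ℕ := if 0 ≤ k then n.choose k.toNat else 0

/-- Step pseudo-distribution p_k = δ_{k0} + (-1)^{k-1} c C(2N, k+N) on {-N,...,N}. -/
noncomputable def step (N : ℕ) (c : ℝ) (k : ℤ) : ℝ :=
  if k ∈ Finset.Icc (-(N : ℤ)) (N : ℤ) then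
    (if k = 0 then 1 else 0) + (-1 : ℝ) ^ (k - 1) * c * (ichoose (2 * N) (k + N) : ℝ)
  else 0

/-- Pseudo-distribution of S_n (n-fold convolution of the step distribution). -/
noncomputable def walk (N : ℕ) (c : ℝ) : ℕ → ℤ → ℝ
  | 0, k => if k = 0 then 1 else 0
  | n + 1, k => ∑ j ∈ Finset.Icc (-(N : ℤ)) (N : ℤ), step N c j * walk N c n (k - j)





lemma ichoose_of_neg (a : ℕ) {m : ℤ} (h : m < 0) : ichoose a m = 0 := by
  simp [ichoose, not_le.mpr h]

lemma ichoose_coe (a i : ℕ) : ichoose a (i : ℤ) = a.choose i := by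
  simp [ichoose]

lemma ichoose_zero_left (m : ℤ) : (ichoose 0 m : ℝ) = if m = 0 then 1 else 0 := by
  rcases lt_trichotomy m 0 with h | h | h
  · simp [ichoose_of_neg _ h, h.ne]
  · simp [h, ichoose]
  · have : m.toNat ≠ 0 := by omega
    simp [ichoose, h.le, Nat.choose_eq_zero_of_lt (Nat.pos_of_ne_zero this), this, h.ne']

lemma ichoose_pascal (a : ℕ) (m : ℤ) :
    ichoose (a + 1) m = ichoose a m + ichoose a (m - 1) := by
  rcases lt_trichotomy m 0 with h | h | h
  · simp [ichoose_of_neg _ h, ichoose_of_neg _ (by omega : m - 1 < 0)]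
  · subst h
    simp [ichoose, ichoose_of_neg a (by norm_num : (0:ℤ) - 1 < 0)]
  · obtain ⟨t, rfl⟩ : ∃ t : ℕ, m = (t : ℤ) + 1 := ⟨(m - 1).toNat, by omega⟩
    have h1 : ((t:ℤ) + 1).toNat = t + 1 := by omega
    have h2 : ((t:ℤ) + 1 - 1) = (t : ℤ) := by ring
    simp [ichoose, h1, h2, h.le, Nat.choose_succ_succ, Nat.add_comm]

lemma pascal_sum (n : ℕ) (g : ℕ → ℝ) :
    ∑ i ∈ range (n + 2), ((n + 1).choose i : ℝ) * g i
      = ∑ i ∈ range (n + 1), (n.choose i : ℝ) * g i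
        + ∑ i ∈ range (n + 1), (n.choose i : ℝ) * g (i + 1) := by
  rw [Finset.sum_range_succ' (fun i => ((n + 1).choose i : ℝ) * g i) (n + 1)]
  have : ∀ i ∈ range (n + 1), ((n + 1).choose (i + 1) : ℝ) * g (i + 1)
      = (n.choose i : ℝ) * g (i + 1) + (n.choose (i+1) : ℝ) * g (i + 1) := by
    intro i _
    rw [Nat.choose_succ_succ]
    push_cast
    ring
  rw [Finset.sum_congr rfl this, Finset.sum_add_distrib]
  have h2 : (∑ i ∈ range (n + 1), (n.choose (i+1) : ℝ) * g (i + 1))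
      + ((n+1).choose 0 : ℝ) * g 0 = ∑ i ∈ range (n + 1), (n.choose i : ℝ) * g i := by
    rw [Finset.sum_range_succ (fun i => (n.choose (i+1) : ℝ) * g (i + 1)) n,
        Finset.sum_range_succ' (fun i => (n.choose i : ℝ) * g i) n]
    simp [Nat.choose_succ_self]
  linarith [h2]


lemma sum_Icc_shift (f : ℤ → ℝ) (a b c : ℤ) :
    ∑ j ∈ Icc (a + c) (b + c), f j = ∑ j ∈ Icc a b, f (j + c) := by
  rw [← Finset.map_add_right_Icc a b c, Finset.sum_map]
  rfl

lemma sum_Icc_int_eq_sum_range (f : ℤ → ℝ) (n : ℕ) :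
    ∑ i ∈ Icc (0 : ℤ) (n : ℤ), f i = ∑ i ∈ range (n + 1), f (i : ℤ) := by
  induction n with
  | zero => simp
  | succ n ih =>
    have h : Icc (0 : ℤ) ((n : ℤ) + 1) = insert ((n : ℤ) + 1) (Icc (0 : ℤ) (n : ℤ)) := by
      ext x; simp only [Finset.mem_Icc, Finset.mem_insert]; omega
    push_cast
    rw [h, Finset.sum_insert (by simp), Finset.sum_range_succ, ih]
    push_cast
    ring_nf

lemma vand (a b : ℕ) (m : ℤ) :
    ∑ i ∈ range (a + 1), (a.choose i : ℝ) * (ichoose b (m - i) : ℝ)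
      = (ichoose (a + b) m : ℝ) := by
  induction a generalizing m with
  | zero => simp
  | succ a ih =>
    rw [show a + 1 + 1 = a + 2 from rfl,
        pascal_sum a (fun i => (ichoose b (m - i) : ℝ)), ih m]
    have : ∀ i ∈ range (a + 1), (a.choose i : ℝ) * (ichoose b (m - (i + 1 : ℕ)) : ℝ)
        = (a.choose i : ℝ) * (ichoose b (m - 1 - i) : ℝ) := by
      intro i _
      have : m - ((i : ℕ) + 1 : ℕ) = m - 1 - (i : ℕ) := by push_cast; ring
      rw [this]
    rw [Finset.sum_congr rfl this, ih (m - 1)]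
    rw [show a + 1 + b = a + b + 1 by omega, ichoose_pascal (a + b) m]
    push_cast
    ring

lemma alt_sum (a : ℕ) (m : ℤ) :
    ∑ t ∈ Icc (0 : ℤ) m, (-1 : ℝ) ^ t * (ichoose (a + 1) t : ℝ)
      = (-1 : ℝ) ^ m * (ichoose a m : ℝ) := by
  rcases lt_or_ge m 0 with h | h
  · rw [Finset.Icc_eq_empty (by omega), ichoose_of_neg a h]
    simp
  · obtain ⟨n, rfl⟩ : ∃ n : ℕ, m = (n : ℤ) := ⟨m.toNat, by omega⟩
    clear h
    induction n with
    | zero =>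
      have h0 : ((0 : ℕ) : ℤ) = 0 := rfl
      rw [h0, Finset.Icc_self, Finset.sum_singleton,
        show (0:ℤ) = ((0:ℕ):ℤ) from rfl, ichoose_coe, ichoose_coe]
      simp
    | succ m' ih =>
      have hm : (0:ℤ) ≤ (m' : ℤ) := by positivity
      set m := (m' : ℤ) with hmdef
      push_cast
      have h' : Icc (0 : ℤ) (m + 1) = insert (m + 1) (Icc (0 : ℤ) m) := by
        ext x; simp only [Finset.mem_Icc, Finset.mem_insert]; omega
      rw [h', Finset.sum_insert (by simp), ih, ichoose_pascal a (m + 1),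
          show m + 1 - 1 = m by ring]
      have e1 : (-1 : ℝ) ^ (m + 1) = (-1 : ℝ) ^ m * (-1) := by
        rw [zpow_add_one₀ (by norm_num : (-1 : ℝ) ≠ 0)]
      push_cast
      rw [e1]
      ring



lemma neg_one_zpow_sub_one (k : ℤ) : (-1 : ℝ) ^ (k - 1) = -(-1 : ℝ) ^ k := by
  have h : k - 1 = k + (-1) := by ring
  rw [h, zpow_add₀ (by norm_num : (-1 : ℝ) ≠ 0)]
  norm_num

lemma walk_eq (N : ℕ) (c : ℝ) (n : ℕ) (k : ℤ) :
    walk N c n k = (-1 : ℝ) ^ k * ∑ ℓ ∈ range (n + 1),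
      (-c) ^ ℓ * (n.choose ℓ : ℝ) * (ichoose (2 * N * ℓ) (k + (N : ℤ) * ℓ) : ℝ) := by
  induction n generalizing k with
  | zero =>
    rw [walk]
    by_cases h : k = 0 <;> simp [h, ichoose_zero_left]
  | succ n ih =>
    rw [walk]
    have hstep : ∀ j ∈ Icc (-(N : ℤ)) (N : ℤ), step N c j * walk N c n (k - j)
        = (if j = 0 then 1 else 0) * walk N c n (k - j)
          + ((-1 : ℝ) ^ (j - 1) * c * (ichoose (2 * N) (j + N) : ℝ)) * walk N c n (k - j) := by
      intro j hj
      rw [step, if_pos hj]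
      ring
    rw [Finset.sum_congr rfl hstep, Finset.sum_add_distrib]
    have h0mem : (0 : ℤ) ∈ Icc (-(N : ℤ)) (N : ℤ) := by simp
    have hfirst : ∑ j ∈ Icc (-(N : ℤ)) (N : ℤ),
        (if j = 0 then (1 : ℝ) else 0) * walk N c n (k - j) = walk N c n k := by
      rw [Finset.sum_eq_single_of_mem 0 h0mem]
      · simp
      · intro b _ hb
        simp [hb]
    rw [hfirst]
    -- second sum
    have hsecond : ∀ j ∈ Icc (-(N : ℤ)) (N : ℤ),
        ((-1 : ℝ) ^ (j - 1) * c * (ichoose (2 * N) (j + N) : ℝ)) * walk N c n (k - j)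
        = (-1 : ℝ) ^ k * ∑ ℓ ∈ range (n + 1),
            (-c) ^ (ℓ + 1) * (n.choose ℓ : ℝ) *
              ((ichoose (2 * N) (j + N) : ℝ) * (ichoose (2 * N * ℓ) (k - j + (N : ℤ) * ℓ) : ℝ)) := by
      intro j hj
      rw [ih (k - j), neg_one_zpow_sub_one j]
      simp only [Finset.mul_sum]
      apply Finset.sum_congr rfl
      intro ℓ _
      have hsg : (-1 : ℝ) ^ j * (-1 : ℝ) ^ (k - j) = (-1 : ℝ) ^ k := by
        rw [← zpow_add₀ (by norm_num : (-1 : ℝ) ≠ 0)]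
        congr 1
        ring
      rw [pow_succ]
      linear_combination (-(c * (ichoose (2 * N) (j + N) : ℝ) * ((-c) ^ ℓ * (n.choose ℓ : ℝ)
        * (ichoose (2 * N * ℓ) (k - j + (N : ℤ) * ℓ) : ℝ)))) * hsg
    rw [Finset.sum_congr rfl hsecond, ← Finset.mul_sum, Finset.sum_comm]
    have hinner : ∀ ℓ ∈ range (n + 1), ∑ j ∈ Icc (-(N : ℤ)) (N : ℤ),
        (-c) ^ (ℓ + 1) * (n.choose ℓ : ℝ) *
          ((ichoose (2 * N) (j + N) : ℝ) * (ichoose (2 * N * ℓ) (k - j + (N : ℤ) * ℓ) : ℝ))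
        = (-c) ^ (ℓ + 1) * (n.choose ℓ : ℝ) *
            (ichoose (2 * N * (ℓ + 1)) (k + (N : ℤ) * (ℓ + 1)) : ℝ) := by
      intro ℓ _
      rw [← Finset.mul_sum]
      congr 1
      have hIcc : Icc (-(N : ℤ)) (N : ℤ) = Icc ((0 : ℤ) + (-(N : ℤ))) (((2 * N : ℕ) : ℤ) + (-(N : ℤ))) := by
        congr 1 <;> push_cast <;> ring
      rw [hIcc, sum_Icc_shift (fun j => (ichoose (2 * N) (j + N) : ℝ) *
          (ichoose (2 * N * ℓ) (k - j + (N : ℤ) * ℓ) : ℝ)) 0 ((2 * N : ℕ) : ℤ) (-(N : ℤ)),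
        sum_Icc_int_eq_sum_range (fun i => (ichoose (2 * N) (i + -(N : ℤ) + N) : ℝ) *
          (ichoose (2 * N * ℓ) (k - (i + -(N : ℤ)) + (N : ℤ) * ℓ) : ℝ)) (2 * N)]
      have hterm : ∀ i ∈ range (2 * N + 1),
          (ichoose (2 * N) ((i : ℤ) + -(N : ℤ) + N) : ℝ) *
            (ichoose (2 * N * ℓ) (k - ((i : ℤ) + -(N : ℤ)) + (N : ℤ) * ℓ) : ℝ)
          = ((2 * N).choose i : ℝ) *
              (ichoose (2 * N * ℓ) ((k + (N : ℤ) * (ℓ + 1)) - (i : ℤ)) : ℝ) := by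
        intro i _
        have e1 : (i : ℤ) + -(N : ℤ) + N = (i : ℤ) := by ring
        have e2 : k - ((i : ℤ) + -(N : ℤ)) + (N : ℤ) * ℓ = (k + (N : ℤ) * (ℓ + 1)) - (i : ℤ) := by
          ring
        rw [e1, e2, ichoose_coe]
      rw [Finset.sum_congr rfl hterm, vand (2 * N) (2 * N * ℓ) (k + (N : ℤ) * (ℓ + 1))]
      congr 2
      ring
    rw [Finset.sum_congr rfl hinner, ih k]
    have hg := pascal_sum n (fun ℓ => (-c) ^ ℓ * (ichoose (2 * N * ℓ) (k + (N : ℤ) * ℓ) : ℝ))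
    have hL : ∑ ℓ ∈ range (n + 1 + 1), (-c) ^ ℓ * ((n + 1).choose ℓ : ℝ) *
        (ichoose (2 * N * ℓ) (k + (N : ℤ) * ℓ) : ℝ)
        = ∑ i ∈ range (n + 2), ((n + 1).choose i : ℝ) *
            ((-c) ^ i * (ichoose (2 * N * i) (k + (N : ℤ) * i) : ℝ)) := by
      apply Finset.sum_congr (by norm_num)
      intro i _; ring
    rw [hL, hg, mul_add]
    congr 1
    · rw [Finset.mul_sum, Finset.mul_sum]
      apply Finset.sum_congr rfl
      intro ℓ _; ring
    · rw [Finset.mul_sum, Finset.mul_sum]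
      apply Finset.sum_congr rfl
      intro ℓ _
      have : ((ℓ : ℤ) + 1) = ((ℓ + 1 : ℕ) : ℤ) := by push_cast; ring
      rw [show (N:ℤ) * (ℓ + 1) = (N:ℤ) * ((ℓ+1:ℕ):ℤ) by push_cast; ring]
      push_cast
      ring

/-- P{S_n ≤ k} = 𝟙_{k≥0} + (-1)^k ∑_{ℓ=1}^{n} (-c)^ℓ C(n,ℓ) C(2Nℓ-1, k+Nℓ). -/
theorem stmt9 (N n : ℕ) (hN : 0 < N) (hn : 0 < n) (c : ℝ) (k : ℤ) :
    ∑' j : {j : ℤ // j ≤ k}, walk N c n (j : ℤ) =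
    (if 0 ≤ k then (1 : ℝ) else 0) +
      (-1 : ℝ) ^ k *
        ∑ ℓ ∈ Finset.Icc 1 n,
          (-c) ^ ℓ * (n.choose ℓ : ℝ) * (ichoose (2 * N * ℓ - 1) (k + (N : ℤ) * ℓ) : ℝ) := by
  set M : ℕ := N * n with hM
  set T : Finset ℤ := Icc (-(M : ℤ)) k with hT
  have hvanish : ∀ j : ℤ, j < -(M : ℤ) → walk N c n j = 0 := by
    intro j hj
    rw [walk_eq]
    rw [Finset.sum_eq_zero, mul_zero]
    intro ℓ hℓ
    have hℓn : ℓ ≤ n := by simpa [Nat.lt_succ_iff] using hℓ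
    have : j + (N : ℤ) * ℓ < 0 := by
      have : (N : ℤ) * ℓ ≤ (M : ℤ) := by
        rw [hM]; push_cast
        have := Nat.mul_le_mul_left N hℓn
        exact_mod_cast this
      omega
    rw [ichoose_of_neg _ this]
    simp
  -- reduce tsum to a finite sum over T
  have htsum : ∑' j : {j : ℤ // j ≤ k}, walk N c n (j : ℤ)
      = ∑ j ∈ T, walk N c n j := by
    have h1 : ∑' j : {j : ℤ // j ≤ k}, walk N c n (j : ℤ)
        = ∑ j ∈ T.subtype (· ≤ k), walk N c n (j : ℤ) := by
      apply tsum_eq_sum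
      intro b hb
      rw [Finset.mem_subtype] at hb
      apply hvanish
      have hbk : (b : ℤ) ≤ k := b.2
      have : ¬((-(M : ℤ)) ≤ (b : ℤ) ∧ (b : ℤ) ≤ k) := by
        simpa [hT, Finset.mem_Icc] using hb
      omega
    rw [h1]
    exact Finset.sum_subtype_of_mem _ (fun x hx => (Finset.mem_Icc.mp hx).2)
  rw [htsum]
  -- rewrite walk and swap sums
  have hswap : ∑ j ∈ T, walk N c n j
      = ∑ ℓ ∈ range (n + 1), ∑ j ∈ T,
          (-c) ^ ℓ * (n.choose ℓ : ℝ) *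
            ((-1 : ℝ) ^ j * (ichoose (2 * N * ℓ) (j + (N : ℤ) * ℓ) : ℝ)) := by
    rw [Finset.sum_comm]
    apply Finset.sum_congr rfl
    intro j _
    rw [walk_eq, Finset.mul_sum]
    apply Finset.sum_congr rfl
    intro ℓ _
    ring
  rw [hswap]
  -- per-ℓ inner sums
  have hS0 : ∑ j ∈ T, (-c) ^ 0 * (n.choose 0 : ℝ) *
      ((-1 : ℝ) ^ j * (ichoose (2 * N * 0) (j + (N : ℤ) * ((0 : ℕ) : ℤ)) : ℝ))
      = (if 0 ≤ k then (1 : ℝ) else 0) := by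
    have : ∀ j ∈ T, (-c) ^ 0 * (n.choose 0 : ℝ) *
        ((-1 : ℝ) ^ j * (ichoose (2 * N * 0) (j + (N : ℤ) * ((0 : ℕ) : ℤ)) : ℝ))
        = (if j = 0 then (1 : ℝ) else 0) := by
      intro j _
      have h0 : 2 * N * 0 = 0 := by ring
      have h1 : j + (N : ℤ) * ((0 : ℕ) : ℤ) = j := by push_cast; ring
      rw [h0, h1, ichoose_zero_left]
      by_cases h : j = 0 <;> simp [h]
    rw [Finset.sum_congr rfl this, Finset.sum_ite_eq' T 0 (fun _ => (1 : ℝ))]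
    have hmem : (0 : ℤ) ∈ T ↔ 0 ≤ k := by
      simp [hT, Finset.mem_Icc]
    by_cases h : 0 ≤ k
    · rw [if_pos (hmem.mpr h), if_pos h]
    · rw [if_neg (fun hh => h (hmem.mp hh)), if_neg h]
  have hSℓ : ∀ ℓ ∈ Icc 1 n, ∑ j ∈ T,
      (-c) ^ ℓ * (n.choose ℓ : ℝ) *
        ((-1 : ℝ) ^ j * (ichoose (2 * N * ℓ) (j + (N : ℤ) * ℓ) : ℝ))
      = (-1 : ℝ) ^ k * ((-c) ^ ℓ * (n.choose ℓ : ℝ) *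
          (ichoose (2 * N * ℓ - 1) (k + (N : ℤ) * ℓ) : ℝ)) := by
    intro ℓ hℓ
    rw [Finset.mem_Icc] at hℓ
    rw [← Finset.mul_sum]
    set B : ℤ := (N : ℤ) * ℓ with hB
    have hBnonneg : 0 ≤ B := by positivity
    have hBM : B ≤ (M : ℤ) := by
      rw [hB, hM]; push_cast
      have := Nat.mul_le_mul_left N hℓ.2
      exact_mod_cast this
    have hshrink : ∑ j ∈ T, (-1 : ℝ) ^ j * (ichoose (2 * N * ℓ) (j + B) : ℝ)
        = ∑ j ∈ Icc (-B) k, (-1 : ℝ) ^ j * (ichoose (2 * N * ℓ) (j + B) : ℝ) := by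
      symm
      apply Finset.sum_subset
      · intro x hx
        rw [Finset.mem_Icc] at hx ⊢
        omega
      · intro x hx hx'
        rw [Finset.mem_Icc] at hx hx'
        have : x + B < 0 := by omega
        rw [ichoose_of_neg _ this]
        simp
    rw [hshrink]
    have hIcc2 : Icc (-B) k = Icc ((0 : ℤ) + (-B)) ((k + B) + (-B)) := by
      congr 1 <;> ring
    rw [hIcc2, sum_Icc_shift (fun j => (-1 : ℝ) ^ j * (ichoose (2 * N * ℓ) (j + B) : ℝ))
        0 (k + B) (-B)]
    have hterm : ∀ t ∈ Icc (0 : ℤ) (k + B),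
        (-1 : ℝ) ^ (t + -B) * (ichoose (2 * N * ℓ) (t + -B + B) : ℝ)
        = ((-1 : ℝ) ^ B)⁻¹ * ((-1 : ℝ) ^ t * (ichoose (2 * N * ℓ) t : ℝ)) := by
      intro t _
      have e1 : t + -B + B = t := by ring
      have e2 : (-1 : ℝ) ^ (t + -B) = (-1 : ℝ) ^ t * ((-1 : ℝ) ^ B)⁻¹ := by
        rw [zpow_add₀ (by norm_num : (-1 : ℝ) ≠ 0), zpow_neg]
      rw [e1, e2]
      ring
    rw [Finset.sum_congr rfl hterm, ← Finset.mul_sum]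
    have h2N : 2 * N * ℓ - 1 + 1 = 2 * N * ℓ := by
      have h1 : 2 * N * 1 ≤ 2 * N * ℓ := Nat.mul_le_mul_left _ hℓ.1
      omega
    rw [show (fun t => ((-1 : ℝ) ^ t * (ichoose (2 * N * ℓ) t : ℝ))) =
        (fun t => ((-1 : ℝ) ^ t * (ichoose ((2 * N * ℓ - 1) + 1) t : ℝ))) by rw [h2N]]
    rw [alt_sum (2 * N * ℓ - 1) (k + B)]
    have e3 : ((-1 : ℝ) ^ B)⁻¹ * ((-1 : ℝ) ^ (k + B)) = (-1 : ℝ) ^ k := by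
      rw [← zpow_neg, ← zpow_add₀ (by norm_num : (-1 : ℝ) ≠ 0)]
      congr 1
      ring
    calc (-c) ^ ℓ * (n.choose ℓ : ℝ) * (((-1 : ℝ) ^ B)⁻¹ *
            ((-1 : ℝ) ^ (k + B) * (ichoose (2 * N * ℓ - 1) (k + B) : ℝ)))
        = (((-1 : ℝ) ^ B)⁻¹ * ((-1 : ℝ) ^ (k + B))) *
            ((-c) ^ ℓ * (n.choose ℓ : ℝ) * (ichoose (2 * N * ℓ - 1) (k + B) : ℝ)) := by ring
      _ = (-1 : ℝ) ^ k * ((-c) ^ ℓ * (n.choose ℓ : ℝ) *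
            (ichoose (2 * N * ℓ - 1) (k + B) : ℝ)) := by rw [e3]
  -- split range (n+1) = insert 0 (Icc 1 n)
  have hrange : range (n + 1) = insert 0 (Icc 1 n) := by
    ext x
    simp only [Finset.mem_range, Finset.mem_insert, Finset.mem_Icc]
    omega
  rw [hrange, Finset.sum_insert (by simp), hS0]
  congr 1
  rw [Finset.sum_congr rfl hSℓ, ← Finset.mul_sum]
end

section
/- Suppose 0 < c ≤ 1/2^{2N-1} and let P{S_n = 0} = (1/2π)∫_0^{2π} (1 - c 4^N sin^{2N}(θ/2))^n dθ. Then for every δ ∈ (0, 1/(2N)), P{S_n = 0} = O(n^{-δ}) as n → ∞. -/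
open Finset MeasureTheory intervalIntegral Asymptotics Filter

/-- The characteristic function f(θ) = 1 - c 4^N sin^{2N}(θ/2). -/
noncomputable def charFn (N : ℕ) (c : ℝ) (θ : ℝ) : ℝ :=
  1 - c * 4 ^ N * Real.sin (θ / 2) ^ (2 * N)

/-- P{S_n = 0} = (1/2π) ∫_0^{2π} f(θ)^n dθ. -/
noncomputable def Pzero (N : ℕ) (c : ℝ) (n : ℕ) : ℝ :=
  (1 / (2 * Real.pi)) * ∫ θ in (0 : ℝ)..(2 * Real.pi), (charFn N c θ) ^ n

set_option maxHeartbeats 1000000 in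
lemma key_pointwise (N : ℕ) (hN : 0 < N) (c : ℝ) (hc0 : 0 < c) (hc2 : c * 4 ^ N ≤ 2)
    (ε : ℝ) (hε0 : 0 < ε) (hε1 : ε ≤ 1) (n : ℕ) {θ : ℝ} (hθ0 : 0 ≤ θ)
    (hθ2 : θ ≤ 2 * Real.pi) :
    |charFn N c θ| ^ n ≤ Real.exp (-(n * ε / 2))
      + (Set.Icc (0:ℝ) (Real.pi * (ε / (c * 4 ^ N)) ^ (((2*N : ℕ) : ℝ))⁻¹)).indicator
          (fun _ => (1:ℝ)) θ
      + (Set.Icc (Real.pi - Real.pi * Real.sqrt (ε / 2))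
          (Real.pi + Real.pi * Real.sqrt (ε / 2))).indicator (fun _ => (1:ℝ)) θ
      + (Set.Icc (2 * Real.pi - Real.pi * (ε / (c * 4 ^ N)) ^ (((2*N : ℕ) : ℝ))⁻¹)
          (2 * Real.pi)).indicator (fun _ => (1:ℝ)) θ := by
  have hpi := Real.pi_pos
  set u : ℝ := (ε / (c * 4 ^ N)) ^ (((2*N : ℕ) : ℝ))⁻¹ with hu
  set b : ℝ := Real.pi * Real.sqrt (ε / 2) with hb
  have hc4 : 0 < c * 4 ^ N := by positivity
  have hu0 : 0 ≤ u := Real.rpow_nonneg (by positivity) _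
  have hs0 : 0 ≤ Real.sin (θ / 2) :=
    Real.sin_nonneg_of_nonneg_of_le_pi (by linarith) (by linarith)
  have hs1 : Real.sin (θ / 2) ≤ 1 := Real.sin_le_one _
  have hsp : Real.sin (θ / 2) ^ (2 * N) ≤ 1 := pow_le_one₀ hs0 hs1
  have hsp0 : 0 ≤ Real.sin (θ / 2) ^ (2 * N) := by positivity
  have hf1 : |charFn N c θ| ≤ 1 := by
    unfold charFn
    rw [abs_le]
    constructor
    · nlinarith [mul_le_mul_of_nonneg_left hsp (le_of_lt hc4)]
    · nlinarith [mul_nonneg (le_of_lt hc4) hsp0]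
  have hind : ∀ (s : Set ℝ), θ ∈ s →
      (1:ℝ) ≤ s.indicator (fun _ => (1:ℝ)) θ := fun s hs => by
    rw [Set.indicator_of_mem hs]
  have hnn : ∀ (s : Set ℝ), (0:ℝ) ≤ s.indicator (fun _ => (1:ℝ)) θ := fun s =>
    Set.indicator_nonneg (fun _ _ => zero_le_one) θ
  have hLHS1 : |charFn N c θ| ^ n ≤ 1 := pow_le_one₀ (abs_nonneg _) hf1
  have hexp : (0:ℝ) ≤ Real.exp (-(n * ε / 2)) := (Real.exp_pos _).le
  by_cases h1 : θ ∈ Set.Icc (0:ℝ) (Real.pi * u)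
  · have := hind _ h1
    have h2 := hnn (Set.Icc (Real.pi - b) (Real.pi + b))
    have h3 := hnn (Set.Icc (2 * Real.pi - Real.pi * u) (2 * Real.pi))
    linarith
  by_cases h2 : θ ∈ Set.Icc (Real.pi - b) (Real.pi + b)
  · have := hind _ h2
    have ha := hnn (Set.Icc (0:ℝ) (Real.pi * u))
    have h3 := hnn (Set.Icc (2 * Real.pi - Real.pi * u) (2 * Real.pi))
    linarith
  by_cases h3 : θ ∈ Set.Icc (2 * Real.pi - Real.pi * u) (2 * Real.pi)
  · have := hind _ h3
    have ha := hnn (Set.Icc (0:ℝ) (Real.pi * u))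
    have hb2 := hnn (Set.Icc (Real.pi - b) (Real.pi + b))
    linarith
  -- main case
  rw [Set.mem_Icc] at h1 h2 h3
  have hθu : Real.pi * u < θ := by
    rcases not_and_or.1 h1 with h | h
    · exact absurd hθ0 (by simpa using h)
    · exact not_le.1 h
  have hθu' : θ < 2 * Real.pi - Real.pi * u := by
    rcases not_and_or.1 h3 with h | h
    · exact not_le.1 h
    · linarith [not_le.1 h]
  have hu1 : u < 1 := by nlinarith
  -- lower bound on sin
  have hsu : u ≤ Real.sin (θ / 2) := by
    rcases le_or_gt θ Real.pi with hcase | hcase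
    · have hj := Real.mul_le_sin (x := θ / 2) (by linarith) (by linarith)
      calc u = 2 / Real.pi * (Real.pi * u / 2) := by field_simp
        _ ≤ 2 / Real.pi * (θ / 2) := by
            apply mul_le_mul_of_nonneg_left _ (by positivity)
            linarith
        _ ≤ Real.sin (θ / 2) := hj
    · have hj := Real.mul_le_sin (x := Real.pi - θ / 2) (by linarith) (by linarith)
      rw [Real.sin_pi_sub] at hj
      calc u = 2 / Real.pi * (Real.pi * u / 2) := by field_simp
        _ ≤ 2 / Real.pi * (Real.pi - θ / 2) := by
            apply mul_le_mul_of_nonneg_left _ (by positivity)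
            linarith
        _ ≤ Real.sin (θ / 2) := hj
  have huM : u ^ (2 * N) = ε / (c * 4 ^ N) := by
    rw [hu]
    exact Real.rpow_inv_natCast_pow (by positivity) (by omega)
  have hxlow : ε ≤ c * 4 ^ N * Real.sin (θ / 2) ^ (2 * N) := by
    have h := pow_le_pow_left₀ hu0 hsu (2 * N)
    rw [huM] at h
    calc ε = c * 4 ^ N * (ε / (c * 4 ^ N)) := by field_simp
      _ ≤ c * 4 ^ N * Real.sin (θ / 2) ^ (2 * N) :=
        mul_le_mul_of_nonneg_left h (le_of_lt hc4)
  -- upper bound on sin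
  have hsε : Real.sin (θ / 2) ≤ 1 - ε / 4 := by
    have hbsq : Real.sqrt (ε / 2) ^ 2 = ε / 2 := Real.sq_sqrt (by positivity)
    have hsb0 : 0 ≤ Real.sqrt (ε / 2) := Real.sqrt_nonneg _
    have hcosb : Real.sin (θ / 2) = Real.cos (θ / 2 - Real.pi / 2) := by
      rw [Real.cos_sub_pi_div_two]
    have habs : |θ / 2 - Real.pi / 2| ≤ Real.pi := by
      rw [abs_le]; constructor <;> linarith
    have hq := Real.cos_le_one_sub_mul_cos_sq habs
    rw [← hcosb] at hq
    have hb0 : 0 ≤ b := by positivity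
    have hmid : θ < Real.pi - b ∨ Real.pi + b < θ := by
      rcases not_and_or.1 h2 with h | h
      · left; linarith [not_le.1 h]
      · right; linarith [not_le.1 h]
    have hdist : b / 2 ≤ |θ / 2 - Real.pi / 2| := by
      rcases hmid with h | h
      · rw [abs_of_nonpos (by linarith)]; linarith
      · rw [abs_of_nonneg (by linarith)]; linarith
    have hsq : (b / 2) ^ 2 ≤ (θ / 2 - Real.pi / 2) ^ 2 := by
      have h1 := sq_abs (θ / 2 - Real.pi / 2)
      nlinarith [pow_le_pow_left₀ (by positivity : (0:ℝ) ≤ b / 2) hdist 2]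
    have hbval : b ^ 2 = Real.pi ^ 2 * (ε / 2) := by
      rw [hb, mul_pow, hbsq]
    have hkey : ε / 4 ≤ 2 / Real.pi ^ 2 * (θ / 2 - Real.pi / 2) ^ 2 := by
      have h1 : 2 / Real.pi ^ 2 * (b / 2) ^ 2 ≤ 2 / Real.pi ^ 2 * (θ / 2 - Real.pi / 2) ^ 2 :=
        mul_le_mul_of_nonneg_left hsq (by positivity)
      have h2 : 2 / Real.pi ^ 2 * (b / 2) ^ 2 = ε / 4 := by
        rw [div_pow, hbval]; field_simp; ring
      linarith
    linarith
  have hxhigh : c * 4 ^ N * Real.sin (θ / 2) ^ (2 * N) ≤ 2 - ε / 2 := by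
    have h2N : 2 ≤ 2 * N := by omega
    have hple : Real.sin (θ / 2) ^ (2 * N) ≤ Real.sin (θ / 2) ^ 2 :=
      pow_le_pow_of_le_one hs0 hs1 h2N
    have hsq2 : Real.sin (θ / 2) ^ 2 ≤ (1 - ε / 4) ^ 2 := by nlinarith
    calc c * 4 ^ N * Real.sin (θ / 2) ^ (2 * N)
        ≤ 2 * Real.sin (θ / 2) ^ (2 * N) := mul_le_mul_of_nonneg_right hc2 hsp0
      _ ≤ 2 * (1 - ε / 4) ^ 2 := by nlinarith
      _ ≤ 2 - ε / 2 := by nlinarith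
  have hfle : |charFn N c θ| ≤ 1 - ε / 2 := by
    unfold charFn
    rw [abs_le]
    constructor <;> [linarith; linarith]
  have hstep : |charFn N c θ| ^ n ≤ Real.exp (-(n * ε / 2)) := by
    calc |charFn N c θ| ^ n ≤ (1 - ε / 2) ^ n := pow_le_pow_left₀ (abs_nonneg _) hfle n
      _ ≤ Real.exp (-(ε / 2)) ^ n := by
          apply pow_le_pow_left₀ (by linarith)
          linarith [Real.add_one_le_exp (-(ε / 2))]
      _ = Real.exp (-(n * ε / 2)) := by
          rw [← Real.exp_nat_mul]; ring_nf
  have ha := hnn (Set.Icc (0:ℝ) (Real.pi * u))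
  have hb2 := hnn (Set.Icc (Real.pi - b) (Real.pi + b))
  have h3' := hnn (Set.Icc (2 * Real.pi - Real.pi * u) (2 * Real.pi))
  linarith

lemma indicator_intervalIntegrable (l r a b : ℝ) :
    IntervalIntegrable ((Set.Icc l r).indicator (fun _ => (1:ℝ))) volume a b := by
  rw [intervalIntegrable_iff]
  refine (integrable_indicator_iff measurableSet_Icc).2 ?_
  have h : (volume.restrict (Set.uIoc a b)) (Set.Icc l r) < ⊤ :=
    lt_of_le_of_lt (Measure.restrict_apply_le _ _) measure_Icc_lt_top
  exact integrableOn_const h.ne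

lemma integral_indicator_le (l r : ℝ) (hlr : l ≤ r) :
    ∫ θ in (0:ℝ)..(2*Real.pi), (Set.Icc l r).indicator (fun _ => (1:ℝ)) θ ≤ r - l := by
  have hpi := Real.pi_pos
  rw [intervalIntegral.integral_of_le (by linarith)]
  rw [MeasureTheory.setIntegral_indicator measurableSet_Icc]
  rw [MeasureTheory.setIntegral_const, smul_eq_mul, mul_one]
  calc (volume (Set.Ioc 0 (2*Real.pi) ∩ Set.Icc l r)).toReal
      ≤ (volume (Set.Icc l r)).toReal := by
        apply ENNReal.toReal_mono
        · rw [Real.volume_Icc]; exact ENNReal.ofReal_ne_top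
        · exact measure_mono Set.inter_subset_right
    _ = r - l := by rw [Real.volume_Icc, ENNReal.toReal_ofReal (by linarith)]

set_option maxHeartbeats 1000000 in
/-- If 0 < c ≤ 1/2^{2N-1} then for every δ ∈ (0, 1/(2N)),
P{S_n = 0} = O(n^{-δ}) as n → ∞. -/
theorem stmt11 (N : ℕ) (hN : 0 < N) (c : ℝ) (hc0 : 0 < c)
    (hc : c ≤ 1 / 2 ^ (2 * N - 1)) (δ : ℝ) (hδ0 : 0 < δ) (hδ : δ < 1 / (2 * N)) :
    (fun n : ℕ => Pzero N c n) =O[atTop] (fun n : ℕ => (n : ℝ) ^ (-δ)) := by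
  have hpi := Real.pi_pos
  have hNR : (1:ℝ) ≤ (N:ℝ) := by exact_mod_cast hN
  have hc2 : c * 4 ^ N ≤ 2 := by
    have h4 : (4:ℝ) ^ N = 2 ^ (2*N-1) * 2 := by
      rw [← pow_succ]
      have h : 2*N-1+1 = 2*N := by omega
      rw [h, pow_mul]; norm_num
    rw [h4]
    calc c * ((2:ℝ)^(2*N-1) * 2) ≤ (1/2^(2*N-1)) * (2^(2*N-1)*2) :=
          mul_le_mul_of_nonneg_right hc (by positivity)
      _ = 2 := by field_simp
  have hc4 : (0:ℝ) < c * 4 ^ N := by positivity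
  set β : ℝ := 2*(N:ℝ)*δ with hβ
  have hβ0 : 0 < β := by positivity
  have hβ1 : β < 1 := by
    have h2N : (0:ℝ) < 2*(N:ℝ) := by positivity
    rw [lt_div_iff₀ h2N] at hδ
    rw [hβ]; nlinarith
  set γ : ℝ := δ / (1-β) with hγ
  have hγ0 : 0 < γ := div_pos hδ0 (by linarith)
  set k : ℕ := ⌈γ⌉₊ with hk
  set C₁ : ℝ := ((c*4^N)⁻¹) ^ (((2*N : ℕ):ℝ))⁻¹ with hC₁
  have hC₁0 : 0 ≤ C₁ := Real.rpow_nonneg (by positivity) _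
  set Cexp : ℝ := (k.factorial : ℝ) * (2:ℝ) ^ γ with hCexp
  have hCexp0 : 0 ≤ Cexp := by positivity
  rw [isBigO_iff]
  refine ⟨Cexp + C₁ + 1, ?_⟩
  have hev2 : ∀ᶠ n : ℕ in atTop, (2:ℝ) ≤ (n:ℝ)^((1:ℝ)-β) :=
    ((tendsto_rpow_atTop (by linarith)).comp
      tendsto_natCast_atTop_atTop).eventually_ge_atTop 2
  filter_upwards [eventually_ge_atTop 1, hev2] with n hn1 hn2
  have hn1' : (1:ℝ) ≤ (n:ℝ) := by exact_mod_cast hn1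
  have hn0 : (0:ℝ) < (n:ℝ) := by linarith
  set d : ℝ := (n:ℝ)^(-δ) with hd
  have hd0 : 0 < d := Real.rpow_pos_of_pos hn0 _
  set ε : ℝ := (n:ℝ)^(-β) with hε
  have hε0 : 0 < ε := Real.rpow_pos_of_pos hn0 _
  have hε1 : ε ≤ 1 := Real.rpow_le_one_of_one_le_of_nonpos hn1' (by linarith)
  set u : ℝ := (ε / (c*4^N)) ^ (((2*N:ℕ):ℝ))⁻¹ with hu
  have hu0 : 0 ≤ u := Real.rpow_nonneg (by positivity) _
  have hMne : ((2*N:ℕ):ℝ) ≠ 0 := by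
    have : (0:ℕ) < 2*N := by omega
    exact_mod_cast this.ne'
  have hueq : u = d * C₁ := by
    rw [hu, div_eq_mul_inv, Real.mul_rpow hε0.le (by positivity), hC₁]
    congr 1
    rw [hε, hd, ← Real.rpow_mul hn0.le]
    congr 1
    have hcast : ((2*N:ℕ):ℝ) = 2*(N:ℝ) := by push_cast; ring
    rw [hcast, hβ]
    have hNne : (N:ℝ) ≠ 0 := by positivity
    field_simp
  have hsq_le : Real.sqrt (ε/2) ≤ d := by
    have h1 : Real.sqrt (ε/2) ≤ Real.sqrt ε := Real.sqrt_le_sqrt (by linarith)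
    have h2 : Real.sqrt ε = (n:ℝ) ^ (-β * (2:ℝ)⁻¹) := by
      rw [hε, Real.sqrt_eq_rpow, ← Real.rpow_mul hn0.le]
      norm_num
    have h3 : (n:ℝ)^(-β*(2:ℝ)⁻¹) ≤ (n:ℝ)^(-δ) := by
      apply Real.rpow_le_rpow_of_exponent_le hn1'
      rw [hβ]; nlinarith
    rw [hd]; rw [h2] at h1; linarith
  have hexp_le : Real.exp (-((n:ℝ)*ε/2)) ≤ Cexp * d := by
    set x : ℝ := (n:ℝ)^((1:ℝ)-β)/2 with hx
    have hxε : (n:ℝ)*ε/2 = x := by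
      rw [hx, hε]
      rw [show ((n:ℝ)) * (n:ℝ)^(-β) = (n:ℝ)^((1:ℝ)-β) by
        rw [show (1:ℝ)-β = 1 + -β by ring, Real.rpow_add hn0, Real.rpow_one]]
    have hx1 : (1:ℝ) ≤ x := by rw [hx]; linarith [hn2]
    have hx0 : (0:ℝ) < x := by linarith
    have hbound : Real.exp (-x) ≤ (k.factorial : ℝ) / x ^ k := by
      have h := Real.pow_div_factorial_le_exp (x := x) (le_of_lt hx0) k
      rw [Real.exp_neg]
      have hpos : (0:ℝ) < x ^ k / (k.factorial : ℝ) := by positivity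
      calc (Real.exp x)⁻¹ ≤ (x^k / (k.factorial:ℝ))⁻¹ := by
            apply inv_anti₀ hpos h
        _ = (k.factorial:ℝ) / x^k := by
            rw [inv_div]
    have hxk : x ^ γ ≤ x ^ (k:ℕ) := by
      rw [← Real.rpow_natCast x k]
      exact Real.rpow_le_rpow_of_exponent_le hx1 (Nat.le_ceil γ)
    have hxγpos : (0:ℝ) < x ^ γ := Real.rpow_pos_of_pos hx0 _
    have hxγ : x ^ γ = (n:ℝ)^δ / (2:ℝ)^γ := by
      rw [hx, Real.div_rpow (Real.rpow_nonneg hn0.le _) (by norm_num : (0:ℝ) ≤ 2)]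
      congr 1
      rw [← Real.rpow_mul hn0.le]
      congr 1
      rw [hγ, ← mul_div_assoc]
      exact mul_div_cancel_left₀ δ (by linarith : (1:ℝ)-β ≠ 0)
    calc Real.exp (-((n:ℝ)*ε/2)) = Real.exp (-x) := by rw [hxε]
      _ ≤ (k.factorial:ℝ)/x^(k:ℕ) := hbound
      _ ≤ (k.factorial:ℝ)/x^γ := by
          apply div_le_div_of_nonneg_left (by positivity) hxγpos hxk
      _ = Cexp * d := by
          rw [hxγ, hCexp, hd, Real.rpow_neg hn0.le]
          have h2γ : (0:ℝ) < (2:ℝ)^γ := Real.rpow_pos_of_pos (by norm_num) _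
          have hnδ : (0:ℝ) < (n:ℝ)^δ := Real.rpow_pos_of_pos hn0 _
          field_simp
  -- integral part
  have hcont : Continuous (charFn N c) := by unfold charFn; fun_prop
  have hint1 : IntervalIntegrable (fun θ => |charFn N c θ| ^ n) volume 0 (2*Real.pi) :=
    ((hcont.abs).pow n).intervalIntegrable _ _
  set E : ℝ := Real.exp (-((n:ℝ)*ε/2)) with hE
  have hE0 : 0 ≤ E := (Real.exp_pos _).le
  set s1 : Set ℝ := Set.Icc (0:ℝ) (Real.pi * u) with hs1
  set s2 : Set ℝ := Set.Icc (Real.pi - Real.pi * Real.sqrt (ε/2))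
    (Real.pi + Real.pi * Real.sqrt (ε/2)) with hs2
  set s3 : Set ℝ := Set.Icc (2*Real.pi - Real.pi * u) (2*Real.pi) with hs3
  have hi1 := indicator_intervalIntegrable 0 (Real.pi * u) 0 (2*Real.pi)
  have hi2 := indicator_intervalIntegrable (Real.pi - Real.pi * Real.sqrt (ε/2))
    (Real.pi + Real.pi * Real.sqrt (ε/2)) 0 (2*Real.pi)
  have hi3 := indicator_intervalIntegrable (2*Real.pi - Real.pi * u) (2*Real.pi) 0 (2*Real.pi)
  have hintE : IntervalIntegrable (fun _ : ℝ => E) volume 0 (2*Real.pi) :=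
    intervalIntegrable_const
  have hmono : (∫ θ in (0:ℝ)..(2*Real.pi), |charFn N c θ| ^ n) ≤
      ∫ θ in (0:ℝ)..(2*Real.pi), (E + s1.indicator (fun _ => (1:ℝ)) θ
        + s2.indicator (fun _ => (1:ℝ)) θ + s3.indicator (fun _ => (1:ℝ)) θ) := by
    apply intervalIntegral.integral_mono_on (by linarith) hint1
      (((hintE.add hi1).add hi2).add hi3)
    intro θ hθ
    exact key_pointwise N hN c hc0 hc2 ε hε0 hε1 n hθ.1 hθ.2
  have hsplit : (∫ θ in (0:ℝ)..(2*Real.pi), (E + s1.indicator (fun _ => (1:ℝ)) θ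
        + s2.indicator (fun _ => (1:ℝ)) θ + s3.indicator (fun _ => (1:ℝ)) θ)) =
      (2*Real.pi) * E + (∫ θ in (0:ℝ)..(2*Real.pi), s1.indicator (fun _ => (1:ℝ)) θ)
        + (∫ θ in (0:ℝ)..(2*Real.pi), s2.indicator (fun _ => (1:ℝ)) θ)
        + (∫ θ in (0:ℝ)..(2*Real.pi), s3.indicator (fun _ => (1:ℝ)) θ) := by
    rw [intervalIntegral.integral_add ((hintE.add hi1).add hi2) hi3,
        intervalIntegral.integral_add (hintE.add hi1) hi2,
        intervalIntegral.integral_add hintE hi1,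
        intervalIntegral.integral_const]
    rw [smul_eq_mul]
    ring
  have hsqnn : 0 ≤ Real.sqrt (ε/2) := Real.sqrt_nonneg _
  have hb1 := integral_indicator_le 0 (Real.pi * u) (by positivity)
  have hb2 := integral_indicator_le (Real.pi - Real.pi * Real.sqrt (ε/2))
    (Real.pi + Real.pi * Real.sqrt (ε/2)) (by nlinarith)
  have hb3 := integral_indicator_le (2*Real.pi - Real.pi * u) (2*Real.pi) (by nlinarith)
  have hItot : (∫ θ in (0:ℝ)..(2*Real.pi), |charFn N c θ| ^ n) ≤
      2*Real.pi*E + Real.pi*u + 2*(Real.pi*Real.sqrt (ε/2)) + Real.pi*u := by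
    rw [hsplit] at hmono
    calc (∫ θ in (0:ℝ)..(2*Real.pi), |charFn N c θ| ^ n) ≤ _ := hmono
      _ ≤ 2*Real.pi*E + Real.pi*u + 2*(Real.pi*Real.sqrt (ε/2)) + Real.pi*u := by
          rw [hs1, hs2, hs3] at *
          have e1 : Real.pi * u - 0 = Real.pi * u := by ring
          have e2 : (Real.pi + Real.pi * Real.sqrt (ε/2)) -
              (Real.pi - Real.pi * Real.sqrt (ε/2)) = 2*(Real.pi*Real.sqrt (ε/2)) := by ring
          have e3 : 2*Real.pi - (2*Real.pi - Real.pi * u) = Real.pi * u := by ring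
          linarith
  -- conclusion
  have hJ : |∫ θ in (0:ℝ)..(2*Real.pi), charFn N c θ ^ n| ≤
      ∫ θ in (0:ℝ)..(2*Real.pi), |charFn N c θ| ^ n := by
    have h := intervalIntegral.abs_integral_le_integral_abs
      (a := (0:ℝ)) (b := 2*Real.pi) (f := fun θ => charFn N c θ ^ n) (μ := volume) (by linarith)
    simpa [abs_pow] using h
  have hPle : |Pzero N c n| ≤ (1/(2*Real.pi)) *
      (2*Real.pi*E + Real.pi*u + 2*(Real.pi*Real.sqrt (ε/2)) + Real.pi*u) := by
    unfold Pzero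
    rw [abs_mul, abs_of_nonneg (by positivity : (0:ℝ) ≤ 1/(2*Real.pi))]
    apply mul_le_mul_of_nonneg_left _ (by positivity)
    exact hJ.trans hItot
  have hfinal : (1/(2*Real.pi)) *
      (2*Real.pi*E + Real.pi*u + 2*(Real.pi*Real.sqrt (ε/2)) + Real.pi*u) ≤
      (Cexp + C₁ + 1) * d := by
    have e1 : 2*Real.pi*E ≤ 2*Real.pi*(Cexp*d) := by
      apply mul_le_mul_of_nonneg_left _ (by positivity)
      exact hexp_le
    have e2 : Real.pi * u = Real.pi * (d * C₁) := by rw [hueq]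
    have e3 : Real.pi*Real.sqrt (ε/2) ≤ Real.pi * d :=
      mul_le_mul_of_nonneg_left hsq_le hpi.le
    have h1 : 2*Real.pi*E + Real.pi*u + 2*(Real.pi*Real.sqrt (ε/2)) + Real.pi*u ≤
        2*Real.pi*((Cexp + C₁ + 1)*d) := by nlinarith
    calc (1/(2*Real.pi)) *
        (2*Real.pi*E + Real.pi*u + 2*(Real.pi*Real.sqrt (ε/2)) + Real.pi*u)
        ≤ (1/(2*Real.pi)) * (2*Real.pi*((Cexp + C₁ + 1)*d)) :=
          mul_le_mul_of_nonneg_left h1 (by positivity)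
      _ = (Cexp + C₁ + 1)*d := by field_simp
  rw [Real.norm_eq_abs, Real.norm_eq_abs, abs_of_nonneg (by positivity : (0:ℝ) ≤ (n:ℝ)^(-δ))]
  calc |Pzero N c n| ≤ _ := hPle
    _ ≤ (Cexp + C₁ + 1) * d := hfinal
end

section
/- Consider the Vandermonde system ∑_{k=1}^N a_k^ℓ x_k = α_ℓ for 1 ≤ ℓ ≤ N, with a_1, ..., a_N nonzero and pairwise distinct, and with α_ℓ = 0 for 1 ≤ ℓ ≤ N-1. Then its unique solution is x_k = α_N / (a_k · ∏_{j≠k} (a_k - a_j)) for 1 ≤ k ≤ N. -/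
open Finset Polynomial

/-- Solution of a Vandermonde system with vanishing right-hand side except in the
last equation: if ∑_k a_k^ℓ x_k = 0 for 1 ≤ ℓ ≤ N-1 and ∑_k a_k^N x_k = αN, with
the a_k nonzero and pairwise distinct, then x_k = αN / (a_k ∏_{j≠k} (a_k - a_j)). -/
theorem stmt12 {F : Type*} [Field F] (N : ℕ) (hN : 0 < N) (a x : Fin N → F)
    (ha0 : ∀ k, a k ≠ 0) (hinj : Function.Injective a) (αN : F)
    (hsys : ∀ ℓ : ℕ, 1 ≤ ℓ → ℓ ≤ N - 1 → ∑ k, a k ^ ℓ * x k = 0)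
    (hlast : ∑ k, a k ^ N * x k = αN) :
    ∀ k, x k = αN / (a k * ∏ j ∈ Finset.univ.erase k, (a k - a j)) := by
  intro k
  have hinjOn : Set.InjOn a (Finset.univ : Finset (Fin N)) := fun i _ j _ h => hinj h
  set P : F[X] := Lagrange.basis Finset.univ a k with hP
  have hdeg : P.natDegree = N - 1 := by
    rw [hP, Lagrange.natDegree_basis hinjOn (mem_univ k), card_univ, Fintype.card_fin]
  -- key: a k * x k = ∑_j P.eval (a j) * (a j * x j)
  have hprodne : ∀ j ∈ Finset.univ.erase k, a k - a j ≠ 0 := by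
    intro j hj
    rw [sub_ne_zero]
    exact fun h => (mem_erase.mp hj).1 (hinj h).symm
  have hkey : a k * x k = ∑ j, P.eval (a j) * (a j * x j) := by
    rw [Finset.sum_eq_single k]
    · rw [hP, Lagrange.eval_basis_self hinjOn (mem_univ k), one_mul]
    · intro j _ hj
      rw [hP, Lagrange.eval_basis_of_ne hj.symm (mem_univ j)]
      ring
    · simp
  have heval : ∀ j : Fin N, P.eval (a j) = ∑ m ∈ Finset.range N, P.coeff m * a j ^ m := by
    intro j
    rw [eval_eq_sum_range' (n := N) (by omega) (a j)]
  have hswap : a k * x k = ∑ m ∈ Finset.range N, P.coeff m * ∑ j, a j ^ (m + 1) * x j := by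
    rw [hkey]
    simp_rw [heval, Finset.sum_mul, Finset.mul_sum]
    rw [Finset.sum_comm]
    congr 1; ext m; congr 1; ext j; ring
  have hsum : a k * x k = P.coeff (N - 1) * αN := by
    rw [hswap, Finset.sum_eq_single (N - 1)]
    · congr 1
      rw [(by omega : N - 1 + 1 = N)]
      exact hlast
    · intro m hm hmne
      have hm' : m + 1 ≤ N - 1 := by
        have := Finset.mem_range.mp hm; omega
      rw [hsys (m + 1) (by omega) hm', mul_zero]
    · intro h
      exact absurd (Finset.mem_range.mpr (by omega)) h
  have hlead : P.coeff (N - 1) = (∏ j ∈ Finset.univ.erase k, (a k - a j))⁻¹ := by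
    have : P.coeff (N - 1) = P.leadingCoeff := by rw [Polynomial.leadingCoeff, hdeg]
    rw [this, hP, Lagrange.basis, Polynomial.leadingCoeff_prod, ← Finset.prod_inv_distrib]
    refine Finset.prod_congr rfl fun j hj => ?_
    rw [Lagrange.basisDivisor, Polynomial.leadingCoeff_mul, Polynomial.leadingCoeff_C,
      Polynomial.leadingCoeff_X_sub_C, mul_one]
  have hprodne' : (∏ j ∈ Finset.univ.erase k, (a k - a j)) ≠ 0 :=
    Finset.prod_ne_zero_iff.mpr hprodne
  rw [hlead] at hsum
  field_simp at hsum
  rw [eq_div_iff (mul_ne_zero (ha0 k) hprodne')]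
  linear_combination hsum
end

section
/- Let N be a positive integer and c real. The unique real numbers p_1, ..., p_N satisfying ∑_{k=1}^N k^{2ℓ} p_k = 0 for 1 ≤ ℓ ≤ N-1 and ∑_{k=1}^N k^{2N} p_k = (1/2)(-1)^{N-1} c (2N)! are p_k = (-1)^{k-1} c C(2N, k+N). -/
open Finset Nat

section Stmt13Aux
open Function fwdDiff

lemma fd_iter_zero (n : ℕ) : (fwdDiff (1:ℤ))^[n] (fun _ : ℤ => (0:ℝ)) = fun _ => 0 := by
  induction n with
  | zero => rfl
  | succ n IH => rw [iterate_succ_apply]; simpa [fwdDiff] using IH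

lemma fd_pow (m : ℕ) : ∀ n, m ≤ n →
    (fwdDiff (1:ℤ))^[n] (fun x : ℤ => (x:ℝ)^m) = fun _ => if n = m then (m ! : ℝ) else 0 := by
  induction m using Nat.strong_induction_on with
  | _ m IH =>
    intro n hn
    match m, n with
    | 0, 0 => ext x; simp
    | 0, (n+1) =>
      rw [iterate_succ_apply]
      have : fwdDiff (1:ℤ) (fun _ : ℤ => ((1:ℝ))) = fun _ => 0 := by ext x; simp [fwdDiff]
      simp only [pow_zero, this, fd_iter_zero]
      ext x; simp [Nat.succ_ne_zero]
    | (m+1), (n+1) =>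
      rw [iterate_succ_apply]
      have h1 : fwdDiff (1:ℤ) (fun x : ℤ => (x:ℝ)^(m+1))
          = ∑ i ∈ range (m+1), fun x : ℤ => ((m+1).choose i : ℝ) * (x:ℝ)^i := by
        ext x
        simp only [fwdDiff, Finset.sum_apply]
        push_cast
        rw [add_pow, Finset.sum_range_succ]
        simp [mul_comm]
      rw [h1]
      have h2 : ∀ i ∈ range (m+1),
          (fwdDiff (1:ℤ))^[n] (fun x : ℤ => ((m+1).choose i : ℝ) * (x:ℝ)^i)
          = fun _ => ((m+1).choose i : ℝ) * (if n = i then (i ! : ℝ) else 0) := by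
        intro i hi
        simp only [mem_range] at hi
        have : (fun x : ℤ => ((m+1).choose i : ℝ) * (x:ℝ)^i)
            = ((m+1).choose i : ℝ) • (fun x : ℤ => (x:ℝ)^i) := by ext x; simp
        rw [this, fwdDiff_iter_const_smul, IH i (by omega) n (by omega)]
        ext x; simp
      rw [fwdDiff_iter_finset_sum, Finset.sum_congr rfl h2]
      ext x
      simp only [Finset.sum_apply]
      by_cases h : n = m
      · subst h
        rw [Finset.sum_eq_single n]
        · rw [if_pos rfl, if_pos rfl, Nat.choose_succ_self_right, Nat.factorial_succ]
          push_cast; ring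
        · intro b hb hbm
          rw [if_neg (Ne.symm hbm), mul_zero]
        · intro h; simp at h
      · rw [if_neg (by omega)]
        apply Finset.sum_eq_zero
        intro i hi; simp only [mem_range] at hi
        rw [if_neg (by omega), mul_zero]

lemma neg_one_pow_sub (N j : ℕ) (h : j ≤ 2*N) : ((-1:ℝ))^(2*N - j) = (-1:ℝ)^j := by
  have h1 : (-1:ℝ)^(2*N-j) = (-1:ℝ)^(2*N-j) * ((-1:ℝ)^(2*j)) := by
    rw [pow_mul]; norm_num
  rw [h1, ← pow_add]
  have h2 : 2*N - j + 2*j = 2*N + j := by omega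
  rw [h2, pow_add, pow_mul]; norm_num

lemma sum_split (N : ℕ) (G : ℕ → ℝ) :
    ∑ j ∈ range (2*N+1), G j = G N + ∑ k ∈ Icc 1 N, (G (N-k) + G (N+k)) := by
  rw [Finset.sum_add_distrib]
  have h1 : ∑ k ∈ Icc 1 N, G (N - k) = ∑ j ∈ range N, G j := by
    rw [← Finset.Ico_add_one_right_eq_Icc, Finset.sum_Ico_eq_sum_range, ← Finset.sum_range_reflect]
    apply Finset.sum_congr (by congr 1) fun i hi => ?_
    simp only [mem_range] at hi
    congr 1; omega
  have h2 : ∑ k ∈ Icc 1 N, G (N + k) = ∑ j ∈ Ico (N+1) (2*N+1), G j := by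
    rw [← Finset.Ico_add_one_right_eq_Icc, Finset.sum_Ico_eq_sum_range, Finset.sum_Ico_eq_sum_range]
    apply Finset.sum_congr (by congr 1; omega) fun i hi => ?_
    congr 1; omega
  rw [h1, h2, range_eq_Ico,
    ← Finset.sum_Ico_consecutive G (by omega : 0 ≤ N) (by omega : N ≤ 2*N+1),
    ← Finset.sum_Ico_consecutive G (by omega : N ≤ N+1) (by omega : N+1 ≤ 2*N+1)]
  have : ∑ j ∈ Ico N (N+1), G j = G N := by
    rw [Finset.Ico_add_one_right_eq_Icc, Finset.Icc_self, Finset.sum_singleton]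
  rw [this, range_eq_Ico]; ring

lemma key_sum (N ℓ : ℕ) (hN : 0 < N) (hl : 1 ≤ ℓ) (hlN : ℓ ≤ N) :
    ∑ k ∈ Icc 1 N, (k:ℝ)^(2*ℓ) * ((-1:ℝ)^(k-1) * ((2*N).choose (k+N) : ℝ))
      = if ℓ = N then (1/2) * (-1:ℝ)^(N-1) * ((2*N)! : ℝ) else 0 := by
  set G : ℕ → ℝ := fun j => (-1:ℝ)^j * ((2*N).choose j : ℝ) * ((j:ℝ) - N)^(2*ℓ) with hG
  have hT : ∑ j ∈ range (2*N+1), G j = if 2*N = 2*ℓ then ((2*ℓ)! : ℝ) else 0 := by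
    have := congrFun (fd_pow (2*ℓ) (2*N) (by omega)) (-(N:ℤ))
    rw [fwdDiff_iter_eq_sum_shift] at this
    rw [← this]
    apply Finset.sum_congr rfl fun j hj => ?_
    simp only [mem_range] at hj
    rw [zsmul_eq_mul, hG]
    push_cast
    rw [neg_one_pow_sub N j (by omega)]
    push_cast [nsmul_eq_mul]
    ring
  have hpair : ∀ k ∈ Icc 1 N, G (N-k) + G (N+k)
      = 2 * ((-1:ℝ)^(N+k) * ((2*N).choose (N+k) : ℝ) * (k:ℝ)^(2*ℓ)) := by
    intro k hk
    simp only [mem_Icc] at hk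
    have hc : (2*N).choose (N-k) = (2*N).choose (N+k) := by
      rw [← Nat.choose_symm (by omega : N+k ≤ 2*N)]
      congr 1; omega
    have e1 : ((N-k : ℕ):ℝ) - N = -(k:ℝ) := by
      have : ((N-k:ℕ):ℝ) = (N:ℝ) - k := by
        push_cast [Nat.cast_sub hk.2]; ring
      rw [this]; ring
    have e2 : ((N+k : ℕ):ℝ) - N = (k:ℝ) := by push_cast; ring
    have e3 : ((-1:ℝ))^(N-k) = (-1:ℝ)^(N+k) := by
      have h1 : (-1:ℝ)^(N-k) = (-1:ℝ)^(N-k) * ((-1:ℝ)^(2*k)) := by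
        rw [pow_mul]; norm_num
      rw [h1, ← pow_add]
      congr 1; omega
    rw [hG]
    simp only [e1, e2, e3, hc]
    rw [neg_pow, pow_mul]
    norm_num
    ring
  have hmid : G N = 0 := by
    rw [hG]
    simp only [sub_self]
    rw [zero_pow (by omega)]
    ring
  have hsplit := sum_split N G
  rw [hmid, Finset.sum_congr rfl hpair, zero_add] at hsplit
  -- hsplit : total = 2 * ∑ ...
  have hS : ∑ k ∈ Icc 1 N, (k:ℝ)^(2*ℓ) * ((-1:ℝ)^(k-1) * ((2*N).choose (k+N) : ℝ))
      = (-1:ℝ)^(N-1) * (1/2) * ∑ j ∈ range (2*N+1), G j := by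
    rw [hsplit, Finset.mul_sum]
    apply Finset.sum_congr rfl fun k hk => ?_
    simp only [mem_Icc] at hk
    have s1 : (-1:ℝ)^(k-1) = -(-1:ℝ)^k := by
      have : k - 1 + 1 = k := by omega
      calc (-1:ℝ)^(k-1) = (-1:ℝ)^(k-1) * ((-1)*(-1)) := by norm_num
      _ = -((-1:ℝ)^(k-1+1)) := by rw [pow_succ]; ring
      _ = -(-1:ℝ)^k := by rw [this]
    have s2 : (-1:ℝ)^(N-1) = -(-1:ℝ)^N := by
      have : N - 1 + 1 = N := by omega
      calc (-1:ℝ)^(N-1) = (-1:ℝ)^(N-1) * ((-1)*(-1)) := by norm_num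
      _ = -((-1:ℝ)^(N-1+1)) := by rw [pow_succ]; ring
      _ = -(-1:ℝ)^N := by rw [this]
    rw [s1, s2, pow_add, Nat.add_comm k N]  -- now all N+k
    have hNN : (-1:ℝ)^N * (-1:ℝ)^N = 1 := by rw [← pow_add, ← two_mul, pow_mul]; norm_num
    linear_combination ((k:ℝ)^(2*ℓ) * (((2*N).choose (N+k)):ℝ) * (-1:ℝ)^k) * hNN
  rw [hS, hT]
  rcases eq_or_ne ℓ N with h | h
  · subst h
    rw [if_pos rfl, if_pos rfl]
    ring
  · rw [if_neg (by omega), if_neg h]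
    ring

lemma uniq (N : ℕ) (hN : 0 < N) (d : ℕ → ℝ)
    (h : ∀ ℓ ∈ Icc 1 N, ∑ k ∈ Icc 1 N, (k:ℝ)^(2*ℓ) * d k = 0) :
    ∀ k ∈ Icc 1 N, d k = 0 := by
  set v : Fin N → ℝ := fun k => (((k:ℕ)+1 : ℕ):ℝ)^2 with hv
  set M : Matrix (Fin N) (Fin N) ℝ := Matrix.of fun ℓ k => v k ^ ((ℓ:ℕ)+1) with hM
  set w : Fin N → ℝ := fun k => d ((k:ℕ)+1) with hw
  have hdet : M.det ≠ 0 := by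
    have hA : M = (Matrix.diagonal v * Matrix.vandermonde v).transpose := by
      ext ℓ k
      simp [hM, Matrix.transpose_apply, Matrix.diagonal_mul, Matrix.vandermonde, pow_succ,
        mul_comm]
    rw [hA, Matrix.det_transpose, Matrix.det_mul, Matrix.det_diagonal]
    apply mul_ne_zero
    · apply Finset.prod_ne_zero_iff.mpr
      intro i _
      positivity
    · rw [Matrix.det_vandermonde_ne_zero_iff]
      intro i j hij
      have : ((i:ℕ)+1 : ℝ) = ((j:ℕ)+1 : ℝ) := by
        have h1 : (0:ℝ) ≤ (i:ℕ)+1 := by positivity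
        have h2 : (0:ℝ) ≤ (j:ℕ)+1 := by positivity
        have := hij
        simp only [hv] at this
        push_cast at this
        nlinarith
      have : (i:ℕ) = (j:ℕ) := by exact_mod_cast (by linarith : ((i:ℕ):ℝ) = ((j:ℕ):ℝ))
      exact Fin.ext this
  have hmv : M.mulVec w = 0 := by
    ext ℓ
    have hl := h ((ℓ:ℕ)+1) (by simp [Finset.mem_Icc])
    have hsum : ∑ k ∈ Icc 1 N, (k:ℝ)^(2*((ℓ:ℕ)+1)) * d k
        = ∑ k : Fin N, M ℓ k * w k := by
      rw [← Finset.Ico_add_one_right_eq_Icc, Finset.sum_Ico_eq_sum_range, ← Fin.sum_univ_eq_sum_range]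
      apply Finset.sum_congr rfl fun k _ => ?_
      simp only [hM, hw, hv, Matrix.of_apply]
      rw [← pow_mul, Nat.add_comm 1 (k:ℕ)]
    rw [Matrix.mulVec, Pi.zero_apply]
    simp only [dotProduct]
    rw [← hsum, hl]
  have hw0 : w = 0 := Matrix.eq_zero_of_mulVec_eq_zero hdet hmv
  intro k hk
  simp only [Finset.mem_Icc] at hk
  have := congrFun hw0 ⟨k-1, by omega⟩
  simpa only [hw, Pi.zero_apply, Nat.sub_add_cancel hk.1] using this

lemma q_moment (N : ℕ) (hN : 0 < N) (c : ℝ) (ℓ : ℕ) (h1 : 1 ≤ ℓ) (h2 : ℓ ≤ N) :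
    ∑ k ∈ Icc 1 N, (k:ℝ)^(2*ℓ) * ((-1:ℝ)^(k-1) * c * ((2*N).choose (k+N) : ℝ))
      = if ℓ = N then (1/2) * (-1:ℝ)^(N-1) * c * ((2*N)! : ℝ) else 0 := by
  have hkey := key_sum N ℓ hN h1 h2
  have : ∑ k ∈ Icc 1 N, (k:ℝ)^(2*ℓ) * ((-1:ℝ)^(k-1) * c * ((2*N).choose (k+N) : ℝ))
      = c * ∑ k ∈ Icc 1 N, (k:ℝ)^(2*ℓ) * ((-1:ℝ)^(k-1) * ((2*N).choose (k+N) : ℝ)) := by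
    rw [Finset.mul_sum]
    exact Finset.sum_congr rfl fun k _ => by ring
  rw [this, hkey]
  rcases eq_or_ne ℓ N with h | h
  · rw [if_pos h, if_pos h]; ring
  · rw [if_neg h, if_neg h]; ring

end Stmt13Aux

open Function fwdDiff in

/-- The unique reals p_1,...,p_N with ∑ k^{2ℓ} p_k = 0 for 1 ≤ ℓ ≤ N-1 and
∑ k^{2N} p_k = (1/2)(-1)^{N-1} c (2N)! are p_k = (-1)^{k-1} c C(2N, k+N). -/
theorem stmt13 (N : ℕ) (hN : 0 < N) (c : ℝ) (p : ℕ → ℝ) :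
    ((∀ ℓ : ℕ, 1 ≤ ℓ → ℓ ≤ N - 1 → ∑ k ∈ Finset.Icc 1 N, (k : ℝ) ^ (2 * ℓ) * p k = 0) ∧
      ∑ k ∈ Finset.Icc 1 N, (k : ℝ) ^ (2 * N) * p k =
        (1 / 2) * (-1 : ℝ) ^ (N - 1) * c * ((2 * N)! : ℝ)) ↔
    (∀ k ∈ Finset.Icc 1 N, p k = (-1 : ℝ) ^ (k - 1) * c * ((2 * N).choose (k + N) : ℝ)) := by
  set q : ℕ → ℝ := fun k => (-1:ℝ)^(k-1) * c * ((2*N).choose (k+N) : ℝ) with hq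
  constructor
  · rintro ⟨h1, h2⟩ k hk
    have hd : ∀ ℓ ∈ Icc 1 N, ∑ j ∈ Icc 1 N, (j:ℝ)^(2*ℓ) * (p j - q j) = 0 := by
      intro ℓ hℓ
      simp only [Finset.mem_Icc] at hℓ
      have hsub : ∑ j ∈ Icc 1 N, (j:ℝ)^(2*ℓ) * (p j - q j)
          = (∑ j ∈ Icc 1 N, (j:ℝ)^(2*ℓ) * p j) - ∑ j ∈ Icc 1 N, (j:ℝ)^(2*ℓ) * q j := by
        rw [← Finset.sum_sub_distrib]
        exact Finset.sum_congr rfl fun j _ => by ring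
      rw [hsub, hq, q_moment N hN c ℓ hℓ.1 hℓ.2]
      rcases eq_or_ne ℓ N with h | h
      · subst h
        rw [if_pos rfl, h2, sub_self]
      · rw [if_neg h, h1 ℓ hℓ.1 (by omega), sub_zero]
    have h0 : p k - q k = 0 := by simpa using uniq N hN (fun j => p j - q j) hd k hk
    have hpq : p k = q k := by linarith
    rw [hpq]
  · intro hp
    have hmom : ∀ ℓ : ℕ, 1 ≤ ℓ → ℓ ≤ N →
        ∑ k ∈ Icc 1 N, (k:ℝ)^(2*ℓ) * p k
          = if ℓ = N then (1/2) * (-1:ℝ)^(N-1) * c * ((2*N)! : ℝ) else 0 := by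
      intro ℓ hℓ1 hℓ2
      rw [Finset.sum_congr rfl fun k hk => by rw [hp k hk]]
      exact q_moment N hN c ℓ hℓ1 hℓ2
    constructor
    · intro ℓ hℓ1 hℓ2
      rw [hmom ℓ hℓ1 (by omega), if_neg (by omega)]
    · rw [hmom N hN le_rfl, if_pos rfl]
end

section
/- Fix a positive integer N and an integer b ≥ 1. The unique solution (H_b, H_{b+1}, ..., H_{b+N-1}) of the linear system ∑_{ℓ=b+k}^{b+N-1} C(ℓ-b, k) H_ℓ = (-1)^k C(b+k-1, b-1), for 0 ≤ k ≤ N-1, is H_{b+ℓ} = (-1)^ℓ (b/(ℓ+b)) C(N-1, ℓ) C(b+N-1, b) for 0 ≤ ℓ ≤ N-1. -/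
open Finset Nat

lemma sumA : ∀ (M c : ℕ),
    ∑ j ∈ Finset.range (M + 1), (-1:ℝ)^j * (M.choose j : ℝ) / ((j:ℝ) + c + 1) =
      ((M ! : ℝ) * (c ! : ℝ)) / (((M + c + 1)! : ℝ)) := by
  intro M
  induction M with
  | zero =>
    intro c
    have h1 : ((c:ℝ) + 1) ≠ 0 := by positivity
    have h2 : ((c ! : ℕ) : ℝ) ≠ 0 := by positivity
    simp [Nat.factorial_succ]
    field_simp
  | succ M ih =>
    intro c
    have hB : ∑ j ∈ Finset.range (M + 1), (-1:ℝ)^j * (M.choose (j+1) : ℝ) / ((j:ℝ) + c + 2) =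
        1/((c:ℝ)+1) - ((M ! : ℝ) * (c ! : ℝ)) / (((M + c + 1)! : ℝ)) := by
      have h2 : ∑ j ∈ Finset.range (M + 2), (-1:ℝ)^j * (M.choose j : ℝ) / ((j:ℝ) + c + 1) =
          ((M ! : ℝ) * (c ! : ℝ)) / (((M + c + 1)! : ℝ)) := by
        rw [Finset.sum_range_succ, Nat.choose_eq_zero_of_lt (Nat.lt_succ_self M)]
        simpa using ih c
      rw [Finset.sum_range_succ'] at h2
      have e : ∀ j ∈ Finset.range (M+1),
          (-1:ℝ)^(j+1) * (M.choose (j+1) : ℝ) / ((((j+1):ℕ):ℝ) + c + 1) =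
          -((-1:ℝ)^j * (M.choose (j+1) : ℝ) / ((j:ℝ) + c + 2)) := by
        intro j _
        push_cast
        ring
      rw [Finset.sum_congr rfl e, Finset.sum_neg_distrib] at h2
      simp only [pow_zero, Nat.choose_zero_right, Nat.cast_zero, Nat.cast_one] at h2
      have : (1:ℝ) * 1 / (0 + (c:ℝ) + 1) = 1/((c:ℝ)+1) := by ring
      rw [this] at h2
      linarith
    rw [Finset.sum_range_succ']
    have e : ∀ j ∈ Finset.range (M+1),
        (-1:ℝ)^(j+1) * (((M+1).choose (j+1) : ℕ) : ℝ) / ((((j+1):ℕ):ℝ) + c + 1) =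
        -((-1:ℝ)^j * (M.choose j : ℝ) / ((j:ℝ) + ((c+1):ℕ) + 1)) +
        -((-1:ℝ)^j * (M.choose (j+1) : ℝ) / ((j:ℝ) + c + 2)) := by
      intro j _
      rw [Nat.choose_succ_succ]
      push_cast
      ring
    rw [Finset.sum_congr rfl e, Finset.sum_add_distrib, Finset.sum_neg_distrib,
      Finset.sum_neg_distrib, ih (c+1), hB]
    have hfac1 : (((M + c + 1)! : ℕ) : ℝ) ≠ 0 := by positivity
    have e2 : M + (c+1) + 1 = (M + c + 1) + 1 := by omega
    have e3 : M + 1 + c + 1 = (M + c + 1) + 1 := by omega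
    rw [e2, e3, Nat.factorial_succ (M+c+1), Nat.factorial_succ M, Nat.factorial_succ c]
    push_cast
    have hc1 : ((c:ℝ)+1) ≠ 0 := by positivity
    have hmc : ((M:ℝ)+(c:ℝ)+1+1) ≠ 0 := by positivity
    field_simp
    simp only [Nat.choose_zero_right, Nat.cast_one]
    ring

lemma keyB (k m c : ℕ) :
    ∑ i ∈ Finset.Icc k (k+m), (i.choose k : ℝ) *
      ((-1:ℝ)^i * (((c:ℝ)+1)/((i:ℝ)+c+1)) * ((k+m).choose i : ℝ) * (((c+1+(k+m)).choose (c+1) : ℕ) : ℝ)) =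
      (-1:ℝ)^k * (((c+k).choose c : ℕ) : ℝ) := by
  have hIcc : Finset.Icc k (k+m) = (Finset.range (m+1)).map (addLeftEmbedding k) := by
    rw [← Nat.Ico_zero_eq_range, Finset.Ico_add_one_right_eq_Icc, map_add_left_Icc]
    simp
  rw [hIcc, Finset.sum_map]
  simp only [addLeftEmbedding_apply]
  have e : ∀ j ∈ Finset.range (m+1),
      (((k+j).choose k : ℕ):ℝ) * ((-1:ℝ)^(k+j) * (((c:ℝ)+1)/((((k+j):ℕ):ℝ)+c+1)) * (((k+m).choose (k+j):ℕ):ℝ) * (((c+1+(k+m)).choose (c+1) : ℕ) : ℝ)) =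
      ((-1:ℝ)^k * (((k+m).choose k : ℕ) : ℝ) * (((c+1+(k+m)).choose (c+1) : ℕ) : ℝ) * ((c:ℝ)+1)) *
        ((-1:ℝ)^j * ((m.choose j : ℕ) : ℝ) / ((j:ℝ) + ((k+c : ℕ):ℝ) + 1)) := by
    intro j hj
    have hj' : j ≤ m := Nat.lt_succ_iff.mp (Finset.mem_range.mp hj)
    have hc : (k+m).choose (k+j) * (k+j).choose k = (k+m).choose k * m.choose j := by
      have := Nat.choose_mul (n := k+m) (k := k+j) (s := k) (Nat.le_add_right k j)
      simpa using this
    have hAB : (((k+m).choose (k+j) : ℕ) : ℝ) * (((k+j).choose k : ℕ) : ℝ)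
        = (((k+m).choose k : ℕ) : ℝ) * ((m.choose j : ℕ) : ℝ) := by exact_mod_cast congrArg (Nat.cast : ℕ → ℝ) hc
    have hne : ((k:ℝ)+(j:ℝ)+(c:ℝ)+1) ≠ 0 := by positivity
    push_cast
    linear_combination ((-1:ℝ)^k * (-1:ℝ)^j * ((c:ℝ)+1) *
      (((c+1+(k+m)).choose (c+1) : ℕ) : ℝ) / ((k:ℝ)+(j:ℝ)+(c:ℝ)+1)) * hAB
  rw [Finset.sum_congr rfl e, ← Finset.mul_sum, sumA m (k+c)]
  -- now a pure factorial identity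
  have h1 := Nat.cast_choose ℝ (Nat.le_add_right k m)
  have h2 := Nat.cast_choose ℝ (show c+1 ≤ c+1+(k+m) from Nat.le_add_right _ _)
  have h3 := Nat.cast_choose ℝ (show c ≤ k+c from Nat.le_add_left c k)
  rw [Nat.add_sub_cancel_left] at h1
  rw [Nat.add_sub_cancel_left] at h2
  rw [Nat.add_sub_cancel] at h3
  rw [Nat.add_comm c k, h1, h2, h3]
  have e4 : m + (k+c) + 1 = c+1+(k+m) := by omega
  rw [e4, Nat.factorial_succ c]
  have f1 : (((c+1+(k+m))! : ℕ) : ℝ) ≠ 0 := by positivity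
  have f2 : ((k ! : ℕ) : ℝ) ≠ 0 := by positivity
  have f3 : ((m ! : ℕ) : ℝ) ≠ 0 := by positivity
  have f4 : ((c ! : ℕ) : ℝ) ≠ 0 := by positivity
  have f5 : (((k+m)! : ℕ) : ℝ) ≠ 0 := by positivity
  have f6 : (((k+c)! : ℕ) : ℝ) ≠ 0 := by positivity
  have f7 : ((c:ℝ)+1) ≠ 0 := by positivity
  push_cast
  field_simp

noncomputable def Gfun (n c : ℕ) : ℕ → ℝ := fun i =>
  (-1:ℝ)^i * (((c:ℝ)+1)/((i:ℝ)+c+1)) * ((n.choose i : ℕ) : ℝ) * (((c+1+n).choose (c+1) : ℕ) : ℝ)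

lemma reindex (c k n : ℕ) (f : ℕ → ℝ) :
    ∑ ℓ ∈ Finset.Icc (c+1+k) (c+1+n), (((ℓ - (c+1)).choose k : ℕ) : ℝ) * f ℓ
      = ∑ i ∈ Finset.Icc k n, ((i.choose k : ℕ) : ℝ) * f (c+1+i) := by
  rw [← map_add_left_Icc, Finset.sum_map]
  simp only [addLeftEmbedding_apply, Nat.add_sub_cancel_left]

lemma key_s14 (n c : ℕ) : ∀ k, k ≤ n →
    ∑ i ∈ Finset.Icc k n, ((i.choose k : ℕ) : ℝ) * Gfun n c i
      = (-1:ℝ)^k * (((c+k).choose c : ℕ) : ℝ) := by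
  intro k hk
  have hm : n = k + (n - k) := by omega
  have h := keyB k (n - k) c
  rw [← hm] at h
  simpa [Gfun] using h

/-- The unique solution of ∑_{ℓ=b+k}^{b+N-1} C(ℓ-b, k) H_ℓ = (-1)^k C(b+k-1, b-1),
0 ≤ k ≤ N-1, is H_{b+ℓ} = (-1)^ℓ (b/(ℓ+b)) C(N-1, ℓ) C(b+N-1, b). -/
theorem stmt14 (N b : ℕ) (hN : 0 < N) (hb : 1 ≤ b) (H : ℕ → ℝ) :
    (∀ k ≤ N - 1,
        ∑ ℓ ∈ Finset.Icc (b + k) (b + N - 1), ((ℓ - b).choose k : ℝ) * H ℓ =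
        (-1 : ℝ) ^ k * ((b + k - 1).choose (b - 1) : ℝ)) ↔
    (∀ ℓ ≤ N - 1,
        H (b + ℓ) =
        (-1 : ℝ) ^ ℓ * ((b : ℝ) / ((ℓ : ℝ) + b)) * ((N - 1).choose ℓ : ℝ) *
          ((b + N - 1).choose b : ℝ)) := by
  obtain ⟨n, rfl⟩ : ∃ n, N = n + 1 := ⟨N - 1, by omega⟩
  obtain ⟨c, rfl⟩ : ∃ c, b = c + 1 := ⟨b - 1, by omega⟩
  have en : n + 1 - 1 = n := by omega
  have eb : c + 1 + (n + 1) - 1 = c + 1 + n := by omega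
  have eg : ∀ ℓ : ℕ, ℓ ≤ n → Gfun n c ℓ =
      (-1 : ℝ) ^ ℓ * (((c+1 : ℕ) : ℝ) / ((ℓ : ℝ) + ((c+1:ℕ):ℝ))) * ((n.choose ℓ : ℕ) : ℝ) *
        ((((c+1+n).choose (c+1) : ℕ)) : ℝ) := by
    intro ℓ _
    simp only [Gfun]
    push_cast
    ring
  constructor
  · intro hL
    have main : ∀ m : ℕ, ∀ ℓ, ℓ ≤ n → n - ℓ = m → H (c+1+ℓ) = Gfun n c ℓ := by
      intro m
      induction m using Nat.strong_induction_on with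
      | _ m ih =>
        intro ℓ hℓ hm
        have h1 := hL ℓ (by omega)
        rw [eb, show c+1+ℓ-1 = c+ℓ from by omega, show c+1-1 = c from by omega,
          reindex] at h1
        have h2 := key_s14 n c ℓ hℓ
        rw [Finset.Icc_eq_cons_Ioc hℓ, Finset.sum_cons] at h1 h2
        have hrepl : ∀ i ∈ Finset.Ioc ℓ n,
            ((i.choose ℓ : ℕ):ℝ) * H (c+1+i) = ((i.choose ℓ : ℕ):ℝ) * Gfun n c i := by
          intro i hi
          obtain ⟨hi1, hi2⟩ := Finset.mem_Ioc.mp hi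
          rw [ih (n - i) (by omega) i hi2 rfl]
        rw [Finset.sum_congr rfl hrepl] at h1
        have h3 := h1.trans h2.symm
        simp only [Nat.choose_self, Nat.cast_one, one_mul] at h3
        linarith
    intro ℓ hℓ
    rw [en] at hℓ
    rw [en, eb, show c+1+ℓ = c+1+ℓ from rfl]
    have := main (n - ℓ) ℓ hℓ rfl
    rw [this, eg ℓ hℓ]
  · intro hR k hk
    rw [en] at hk
    rw [eb, show c+1+k-1 = c+k from by omega, show c+1-1 = c from by omega, reindex]
    have hrepl : ∀ i ∈ Finset.Icc k n,
        ((i.choose k : ℕ):ℝ) * H (c+1+i) = ((i.choose k : ℕ):ℝ) * Gfun n c i := by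
      intro i hi
      obtain ⟨hi1, hi2⟩ := Finset.mem_Icc.mp hi
      rw [hR i (by omega), en, eb, eg i hi2]
    rw [Finset.sum_congr rfl hrepl]
    exact key_s14 n c k hk
end

section
/- Let b, N be positive integers and let μ be the signed measure on {b, b+1, ..., b+N-1} with μ({b+ℓ}) = (-1)^ℓ (b/(ℓ+b)) C(N-1,ℓ) C(b+N-1,b). Then for every integer n with 0 ≤ n ≤ N-1, the factorial moment ∑_{ℓ=0}^{N-1} μ({b+ℓ}) · (ℓ)_n equals (-b)_n = (-1)^n b(b+1)⋯(b+n-1), and for every n ≥ N it equals 0. -/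
open Finset

lemma sum_alt_inv : ∀ (K : ℕ) (x : ℝ), 0 < x →
    ∑ j ∈ range (K+1), (-1:ℝ)^j * (K.choose j) / (x + j)
      = (K.factorial : ℝ) / ∏ i ∈ range (K+1), (x + i) := by
  intro K
  induction K with
  | zero => intro x hx; simp
  | succ K ih =>
    intro x hx
    have hx1 : (0:ℝ) < x + 1 := by linarith
    have hrec : ∑ j ∈ range (K+2), (-1:ℝ)^j * ((K+1).choose j) / (x + j)
        = (∑ j ∈ range (K+1), (-1:ℝ)^j * (K.choose j) / (x + j))
          - ∑ j ∈ range (K+1), (-1:ℝ)^j * (K.choose j) / ((x+1) + j) := by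
      rw [Finset.sum_range_succ' (fun j => (-1:ℝ)^j * ((K+1).choose j) / (x + j)) (K+1)]
      have hsplit : ∀ i ∈ range (K+1),
          (-1:ℝ)^(i+1) * ((K+1).choose (i+1)) / (x + (i+1 : ℕ))
          = (-((-1:ℝ)^i * (K.choose i) / ((x+1) + i)))
            + (-1:ℝ)^(i+1) * (K.choose (i+1)) / (x + ((i+1 : ℕ) : ℝ)) := by
        intro i _
        rw [Nat.choose_succ_succ]
        push_cast
        have h1 : x + ((i:ℝ)+1) ≠ 0 := by nlinarith [Nat.cast_nonneg (α := ℝ) i]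
        field_simp
        ring
      rw [Finset.sum_congr rfl hsplit, Finset.sum_add_distrib]
      have h2 : ∑ i ∈ range (K+1), (-1:ℝ)^(i+1) * (K.choose (i+1)) / (x + ((i+1:ℕ):ℝ))
          = (∑ j ∈ range (K+2), (-1:ℝ)^j * (K.choose j) / (x + j))
            - (-1:ℝ)^0 * (K.choose 0) / (x + ((0:ℕ):ℝ)) := by
        rw [Finset.sum_range_succ' (fun j => (-1:ℝ)^j * (K.choose j) / (x + j)) (K+1)]
        push_cast
        ring
      rw [h2, Finset.sum_range_succ (fun j => (-1:ℝ)^j * (K.choose j) / (x + j)) (K+1),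
        Nat.choose_succ_self, Finset.sum_neg_distrib]
      simp only [Nat.choose_zero_right, Nat.cast_zero, Nat.cast_one, pow_zero, Nat.choose_zero_right]
      push_cast
      ring
    rw [hrec, ih x hx, ih (x+1) hx1]
    have hP : (0:ℝ) < ∏ i ∈ range (K+1), (x + i) :=
      Finset.prod_pos (fun i _ => by positivity)
    have hQ : (0:ℝ) < ∏ i ∈ range (K+1), ((x+1) + i) :=
      Finset.prod_pos (fun i _ => by positivity)
    have hR1 : ∏ i ∈ range (K+2), (x + i)
        = (∏ i ∈ range (K+1), (x + i)) * (x + ((K:ℝ)+1)) := by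
      rw [Finset.prod_range_succ]; push_cast; ring
    have hR2 : ∏ i ∈ range (K+2), (x + i)
        = x * ∏ i ∈ range (K+1), ((x+1) + i) := by
      rw [Finset.prod_range_succ' (fun i => x + (i:ℝ)) (K+1),
        Finset.prod_congr rfl
          ((fun i _ => by push_cast; ring) :
            ∀ i ∈ range (K+1), x + ((i+1:ℕ):ℝ) = (x+1) + i)]
      push_cast
      ring
    have hPQ : x * ∏ i ∈ range (K+1), ((x+1) + i)
        = (∏ i ∈ range (K+1), (x + i)) * (x + ((K:ℝ)+1)) := by rw [← hR2, hR1]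
    rw [hR1, Nat.factorial_succ]
    push_cast
    rw [div_sub_div _ _ (ne_of_gt hP) (ne_of_gt hQ), div_eq_div_iff (by positivity) (by positivity)]
    linear_combination ((K.factorial : ℝ) * ∏ i ∈ range (K+1), (x + i)) * hPQ

lemma natA (M n j : ℕ) (h : n + j ≤ M) :
    M.choose (n+j) * (n+j).descFactorial n
      = M.choose n * n.factorial * (M-n).choose j := by
  have hj : j ≤ M - n := by omega
  have e1 : j.factorial * (n+j).descFactorial n = (n+j).factorial := by
    have := Nat.factorial_mul_descFactorial (Nat.le_add_right n j)
    simpa [Nat.add_sub_cancel_left] using this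
  have e2 := Nat.choose_mul_factorial_mul_factorial h
  have e3 := Nat.choose_mul_factorial_mul_factorial (show n ≤ M by omega)
  have e4 := Nat.choose_mul_factorial_mul_factorial hj
  have e5 : M - (n+j) = M - n - j := by omega
  apply Nat.eq_of_mul_eq_mul_right (Nat.mul_pos (Nat.factorial_pos j) (Nat.factorial_pos (M-n-j)))
  have l1 : M.choose (n+j) * (n+j).descFactorial n * (j.factorial * (M-n-j).factorial)
      = M.choose (n+j) * (j.factorial * (n+j).descFactorial n) * (M-(n+j)).factorial := by
    rw [e5]; ring
  rw [l1, e1, e2]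
  have l2 : M.choose n * n.factorial * (M-n).choose j * (j.factorial * (M-n-j).factorial)
      = M.choose n * n.factorial * ((M-n).choose j * j.factorial * (M-n-j).factorial) := by ring
  rw [l2, e4, e3]

lemma natB (b M : ℕ) : (b+M).choose b * b.factorial * M.factorial = (b+M).factorial := by
  have := Nat.choose_mul_factorial_mul_factorial (Nat.le_add_right b M)
  simpa [Nat.add_sub_cancel_left] using this

lemma natC (b : ℕ) (hb : 0 < b) :
    ∀ M, (b-1).factorial * ∏ i ∈ range (M+1), (b+i) = (b+M).factorial := by
  intro M
  induction M with
  | zero =>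
    simp only [zero_add, prod_range_one, add_zero]
    rw [mul_comm]
    exact Nat.mul_factorial_pred hb.ne'
  | succ M ih =>
    rw [prod_range_succ, ← mul_assoc, ih, show b + (M+1) = (b+M)+1 by ring,
      Nat.factorial_succ]
    ring

lemma natE (b M n : ℕ) (hb : 0 < b) (hn : n ≤ M) :
    M.choose n * n.factorial * ((b+M).choose b) * b * (M-n).factorial
      = ∏ i ∈ range (M+1), (b+i) := by
  apply Nat.eq_of_mul_eq_mul_left (Nat.factorial_pos (b-1))
  rw [natC b hb M]
  have l1 : (b-1).factorial * (M.choose n * n.factorial * ((b+M).choose b) * b * (M-n).factorial)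
      = (b+M).choose b * (b * (b-1).factorial) * (M.choose n * n.factorial * (M-n).factorial) := by
    ring
  rw [l1, Nat.mul_factorial_pred hb.ne', Nat.choose_mul_factorial_mul_factorial hn, natB b M]

lemma descP (n b : ℕ) :
    (descPochhammer ℝ n).eval (-(b:ℝ)) = (-1:ℝ)^n * ∏ i ∈ range n, ((b:ℝ)+i) := by
  induction n with
  | zero => simp
  | succ n ih =>
    rw [descPochhammer_succ_eval, ih, prod_range_succ]
    push_cast
    ring

/-- Factorial moments of the overshoot: with
μ({b+ℓ}) = (-1)^ℓ (b/(ℓ+b)) C(N-1,ℓ) C(b+N-1,b), for 0 ≤ n ≤ N-1 one has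
∑_ℓ μ({b+ℓ}) (ℓ)_n = (-b)_n, and for n ≥ N the sum vanishes. -/
theorem stmt16 (b N : ℕ) (hb : 0 < b) (hN : 0 < N) :
    (∀ n ≤ N - 1,
        ∑ ℓ ∈ Finset.range N,
          ((-1 : ℝ) ^ ℓ * ((b : ℝ) / ((ℓ : ℝ) + b)) * ((N - 1).choose ℓ : ℝ) *
              ((b + N - 1).choose b : ℝ)) * (ℓ.descFactorial n : ℝ) =
        (((descPochhammer ℤ n).eval (-(b : ℤ)) : ℤ) : ℝ)) ∧
    (∀ n ≥ N,
        ∑ ℓ ∈ Finset.range N,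
          ((-1 : ℝ) ^ ℓ * ((b : ℝ) / ((ℓ : ℝ) + b)) * ((N - 1).choose ℓ : ℝ) *
              ((b + N - 1).choose b : ℝ)) * (ℓ.descFactorial n : ℝ) = 0) := by
  obtain ⟨M, rfl⟩ : ∃ M, N = M + 1 := ⟨N - 1, by omega⟩
  have eN : M + 1 - 1 = M := by omega
  have eB : b + (M + 1) - 1 = b + M := by omega
  constructor
  · intro n hn
    have hnM : n ≤ M := by omega
    simp only [eN, eB]
    -- rewrite RHS
    have hRHS : (((descPochhammer ℤ n).eval (-(b : ℤ)) : ℤ) : ℝ)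
        = (-1:ℝ)^n * ∏ i ∈ range n, ((b:ℝ)+i) := by
      rw [descPochhammer_eval_cast (R := ℝ) n (-(b:ℤ))]
      push_cast
      exact descP n b
    rw [hRHS]
    set f : ℕ → ℝ := fun ℓ =>
      ((-1 : ℝ) ^ ℓ * ((b : ℝ) / ((ℓ : ℝ) + b)) * (M.choose ℓ : ℝ) *
        ((b + M).choose b : ℝ)) * (ℓ.descFactorial n : ℝ) with hf
    have hsum1 : ∑ ℓ ∈ range (M+1), f ℓ = ∑ j ∈ range (M+1-n), f (n+j) := by
      have hz : ∑ ℓ ∈ Ico 0 n, f ℓ = 0 := by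
        apply sum_eq_zero
        intro ℓ hℓ
        have hlt : ℓ < n := (mem_Ico.mp hℓ).2
        simp [hf, Nat.descFactorial_eq_zero_iff_lt.mpr hlt]
      calc ∑ ℓ ∈ range (M+1), f ℓ = ∑ ℓ ∈ Ico 0 (M+1), f ℓ := by rw [range_eq_Ico]
        _ = ∑ ℓ ∈ Ico 0 n, f ℓ + ∑ ℓ ∈ Ico n (M+1), f ℓ :=
            (Finset.sum_Ico_consecutive f (Nat.zero_le n) (by omega)).symm
        _ = ∑ ℓ ∈ Ico n (M+1), f ℓ := by rw [hz, zero_add]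
        _ = ∑ j ∈ range (M+1-n), f (n+j) := Finset.sum_Ico_eq_sum_range f n (M+1)
    have e2 : M + 1 - n = (M - n) + 1 := by omega
    rw [hsum1, e2]
    have hx : (0:ℝ) < (b:ℝ) + n := by
      have : (1:ℝ) ≤ (b:ℝ) := by exact_mod_cast hb
      positivity
    have hterm : ∀ j ∈ range ((M-n)+1),
        f (n+j) = ((-1:ℝ)^n * (M.choose n : ℝ) * (n.factorial : ℝ)
            * (((b+M).choose b : ℝ)) * (b:ℝ))
          * ((-1:ℝ)^j * (((M-n).choose j : ℝ)) / (((b:ℝ) + (n:ℝ)) + j)) := by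
      intro j hj
      have hjle : n + j ≤ M := by
        have := mem_range.mp hj; omega
      have hA : ((M.choose (n+j) : ℝ)) * (((n+j).descFactorial n : ℝ))
          = (M.choose n : ℝ) * (n.factorial : ℝ) * (((M-n).choose j : ℝ)) := by
        exact_mod_cast congrArg (Nat.cast (R := ℝ)) (natA M n j hjle)
      have hden : ((n:ℝ) + j) + b ≠ 0 := by positivity
      rw [hf]
      simp only
      push_cast
      rw [show ((n:ℝ) + j) + b = ((b:ℝ) + n) + j by ring] at hden ⊢
      field_simp
      linear_combination ((-1:ℝ)^(n+j) * (((b+M).choose b : ℝ))) * hA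
    have hsum2 : ∑ j ∈ range ((M-n)+1), f (n+j)
        = ((-1:ℝ)^n * (M.choose n : ℝ) * (n.factorial : ℝ)
            * (((b+M).choose b : ℝ)) * (b:ℝ))
          * ∑ j ∈ range ((M-n)+1),
              (-1:ℝ)^j * (((M-n).choose j : ℝ)) / (((b:ℝ) + (n:ℝ)) + j) := by
      rw [Finset.sum_congr rfl hterm, ← Finset.mul_sum]
    rw [hsum2, sum_alt_inv (M-n) ((b:ℝ)+(n:ℝ)) hx]
    have hP2 : (0:ℝ) < ∏ i ∈ range ((M-n)+1), (((b:ℝ)+n) + i) :=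
      Finset.prod_pos fun i _ => by positivity
    have hE : ((M.choose n : ℝ)) * (n.factorial : ℝ) * (((b+M).choose b : ℝ)) * (b:ℝ)
          * (((M-n).factorial : ℝ))
        = (∏ i ∈ range n, ((b:ℝ)+i)) * ∏ i ∈ range ((M-n)+1), (((b:ℝ)+n) + i) := by
      have hsplit : (∏ i ∈ range n, ((b:ℝ)+i)) * ∏ i ∈ range ((M-n)+1), (((b:ℝ)+n) + i)
          = ∏ i ∈ range (M+1), ((b:ℝ)+i) := by
        have h1 : ∏ i ∈ range ((M-n)+1), (((b:ℝ)+(n:ℝ)) + i)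
            = ∏ i ∈ range ((M-n)+1), ((fun k : ℕ => (b:ℝ) + k) (n+i)) :=
          Finset.prod_congr rfl fun i _ => by push_cast; ring
        rw [h1, ← Finset.prod_range_add (fun k : ℕ => (b:ℝ) + k) n ((M-n)+1),
          show n + ((M-n)+1) = M + 1 by omega]
      rw [hsplit, show (∏ i ∈ range (M+1), ((b:ℝ)+i))
          = ((∏ i ∈ range (M+1), (b+i) : ℕ) : ℝ) by push_cast; rfl,
        ← natE b M n hb hnM]
      push_cast
      ring
    field_simp
    linear_combination hE
  · intro n hn
    apply Finset.sum_eq_zero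
    intro ℓ hℓ
    have hlt : ℓ < n := lt_of_lt_of_le (mem_range.mp hℓ) hn
    simp [Nat.descFactorial_eq_zero_iff_lt.mpr hlt]
end

section
/- Let b, N be positive integers and μ as above (the pseudo-distribution of S_b^+). Then the factorial pseudo-moments of S_b^+ satisfy: E[(S_b^+)_n] = ∑_{ℓ=0}^{N-1} μ({b+ℓ})(b+ℓ)_n = 0 for 1 ≤ n ≤ N-1 and for n ≥ b+N, while for N ≤ n ≤ b+N-1 it equals (-1)^{N-1} C(n-1, N-1) (b+N-1)_n. In particular E[(S_b^+)^N] = (-1)^{N-1}(b+N-1)!/(b-1)!. -/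
open Finset Nat

lemma alt_step (m : ℕ) (f : ℕ → ℝ) :
    ∑ ℓ ∈ range (m+2), (-1:ℝ)^ℓ * ((m+1).choose ℓ : ℝ) * f ℓ
      = ∑ ℓ ∈ range (m+1), (-1:ℝ)^ℓ * (m.choose ℓ : ℝ) * (f ℓ - f (ℓ+1)) := by
  have hT : ∑ ℓ ∈ range (m+1), (-1:ℝ)^ℓ * (m.choose (ℓ+1) : ℝ) * f (ℓ+1)
      = ∑ ℓ ∈ range m, (-1:ℝ)^ℓ * (m.choose (ℓ+1) : ℝ) * f (ℓ+1) := by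
    rw [Finset.sum_range_succ, Nat.choose_succ_self]
    simp
  have hA : ∑ ℓ ∈ range (m+1), (-1:ℝ)^ℓ * (m.choose ℓ : ℝ) * f ℓ
      = f 0 - ∑ ℓ ∈ range m, (-1:ℝ)^ℓ * (m.choose (ℓ+1) : ℝ) * f (ℓ+1) := by
    rw [Finset.sum_range_succ' (fun ℓ => (-1:ℝ)^ℓ * (m.choose ℓ : ℝ) * f ℓ) m]
    simp only [pow_succ, Nat.choose_zero_right, Nat.cast_one, pow_zero]
    rw [Finset.sum_congr rfl (fun ℓ _ => by ring : ∀ ℓ ∈ range m, (-1:ℝ)^ℓ * -1 * (m.choose (ℓ+1) : ℝ) * f (ℓ+1) = -((-1:ℝ)^ℓ * (m.choose (ℓ+1) : ℝ) * f (ℓ+1))), Finset.sum_neg_distrib]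
    ring
  rw [Finset.sum_range_succ' (fun ℓ => (-1:ℝ)^ℓ * ((m+1).choose ℓ : ℝ) * f ℓ) (m+1)]
  have hsplit : ∀ ℓ ∈ range (m+1), (-1:ℝ)^(ℓ+1) * ((m+1).choose (ℓ+1) : ℝ) * f (ℓ+1)
      = -((-1:ℝ)^ℓ * (m.choose ℓ : ℝ) * f (ℓ+1)) - ((-1:ℝ)^ℓ * (m.choose (ℓ+1) : ℝ) * f (ℓ+1)) := by
    intro ℓ _
    have h : ((m+1).choose (ℓ+1) : ℝ) = (m.choose ℓ : ℝ) + (m.choose (ℓ+1) : ℝ) := by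
      exact_mod_cast congrArg (Nat.cast (R := ℝ)) (Nat.choose_succ_succ' m ℓ)
    rw [h]; ring
  rw [Finset.sum_congr rfl hsplit, Finset.sum_sub_distrib, Finset.sum_neg_distrib]
  have hRHS : ∑ ℓ ∈ range (m+1), (-1:ℝ)^ℓ * (m.choose ℓ : ℝ) * (f ℓ - f (ℓ+1))
      = (∑ ℓ ∈ range (m+1), (-1:ℝ)^ℓ * (m.choose ℓ : ℝ) * f ℓ)
        - ∑ ℓ ∈ range (m+1), (-1:ℝ)^ℓ * (m.choose ℓ : ℝ) * f (ℓ+1) := by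
    rw [← Finset.sum_sub_distrib]
    exact Finset.sum_congr rfl (fun ℓ _ => by ring)
  rw [hRHS, hA, hT]
  simp
  ring

lemma keyL (c : ℕ) : ∀ m r : ℕ,
    ∑ ℓ ∈ range (m+1), (-1:ℝ)^ℓ * (m.choose ℓ : ℝ) * ((c+ℓ).choose r : ℝ)
      = (-1:ℝ)^m * (if m ≤ r then (c.choose (r-m) : ℝ) else 0) := by
  intro m
  induction m with
  | zero => intro r; simp
  | succ m ih =>
    intro r
    have h0 := alt_step m (fun ℓ => ((c+ℓ).choose r : ℝ))
    rw [show m+1+1 = m+2 from rfl, h0]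
    cases r with
    | zero =>
      rw [Finset.sum_congr rfl (fun ℓ _ => by simp :
        ∀ ℓ ∈ range (m+1), (-1:ℝ)^ℓ * (m.choose ℓ : ℝ) * (((c+ℓ).choose 0 : ℝ) - ((c+(ℓ+1)).choose 0 : ℝ)) = 0)]
      simp
    | succ r =>
      have hstep : ∀ ℓ ∈ range (m+1),
          (-1:ℝ)^ℓ * (m.choose ℓ : ℝ) * (((c+ℓ).choose (r+1) : ℝ) - ((c+(ℓ+1)).choose (r+1) : ℝ))
          = -((-1:ℝ)^ℓ * (m.choose ℓ : ℝ) * ((c+ℓ).choose r : ℝ)) := by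
        intro ℓ _
        have h : ((c+(ℓ+1)).choose (r+1) : ℝ) = ((c+ℓ).choose r : ℝ) + ((c+ℓ).choose (r+1) : ℝ) := by
          exact_mod_cast congrArg (Nat.cast (R := ℝ)) (Nat.choose_succ_succ' (c+ℓ) r)
        rw [show c+(ℓ+1) = c+ℓ+1 from rfl] at h
        rw [show c+(ℓ+1) = c+ℓ+1 from rfl, h]; ring
      rw [Finset.sum_congr rfl hstep, Finset.sum_neg_distrib, ih r]
      by_cases hm : m ≤ r
      · rw [if_pos hm, if_pos (Nat.succ_le_succ hm), Nat.succ_sub_succ]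
        ring
      · rw [if_neg hm, if_neg (fun h => hm (Nat.le_of_succ_le_succ h))]
        ring

lemma keyW : ∀ m : ℕ, ∀ k c : ℕ, k ≤ m →
    ∑ ℓ ∈ range (m+1), (-1:ℝ)^ℓ * (m.choose ℓ : ℝ) * ((c+ℓ : ℕ) : ℝ)^k
      = if k = m then (-1:ℝ)^m * (m ! : ℝ) else 0 := by
  intro m
  induction m with
  | zero =>
    intro k c hk
    interval_cases k
    simp
  | succ m ih =>
    intro k c hk
    have h0 := alt_step m (fun ℓ => ((c+ℓ : ℕ) : ℝ)^k)
    rw [show m+1+1 = m+2 from rfl, h0]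
    have hdiff : ∀ ℓ : ℕ, ((c+ℓ : ℕ) : ℝ)^k - ((c+(ℓ+1) : ℕ) : ℝ)^k
        = -∑ j ∈ range k, (k.choose j : ℝ) * ((c+ℓ : ℕ) : ℝ)^j := by
      intro ℓ
      have hc : ((c+(ℓ+1) : ℕ) : ℝ) = ((c+ℓ : ℕ) : ℝ) + 1 := by push_cast; ring
      rw [hc, add_pow, Finset.sum_range_succ]
      simp only [one_pow, mul_one, Nat.choose_self, Nat.cast_one]
      have h2 : ∑ x ∈ range k, ((c+ℓ : ℕ) : ℝ)^x * (k.choose x : ℝ)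
          = ∑ x ∈ range k, (k.choose x : ℝ) * ((c+ℓ : ℕ) : ℝ)^x :=
        Finset.sum_congr rfl (fun _ _ => mul_comm _ _)
      rw [h2]
      ring
    rw [Finset.sum_congr rfl (fun ℓ _ => by rw [hdiff ℓ])]
    rw [Finset.sum_congr rfl (fun ℓ _ => by rw [mul_neg, Finset.mul_sum, ← Finset.sum_neg_distrib] :
      ∀ ℓ ∈ range (m+1), (-1:ℝ)^ℓ * (m.choose ℓ : ℝ) * -∑ j ∈ range k, (k.choose j : ℝ) * ((c+ℓ : ℕ) : ℝ)^j
        = ∑ j ∈ range k, -((-1:ℝ)^ℓ * (m.choose ℓ : ℝ) * ((k.choose j : ℝ) * ((c+ℓ : ℕ) : ℝ)^j)))]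
    rw [Finset.sum_comm]
    have hinner : ∀ j ∈ range k,
        ∑ ℓ ∈ range (m+1), -((-1:ℝ)^ℓ * (m.choose ℓ : ℝ) * ((k.choose j : ℝ) * ((c+ℓ : ℕ) : ℝ)^j))
        = -((k.choose j : ℝ) * (if j = m then (-1:ℝ)^m * (m ! : ℝ) else 0)) := by
      intro j hj
      have hjm : j ≤ m := by
        have := Finset.mem_range.1 hj; omega
      rw [← ih j c hjm, Finset.mul_sum, ← Finset.sum_neg_distrib]
      exact Finset.sum_congr rfl (fun ℓ _ => by ring)
    rw [Finset.sum_congr rfl hinner]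
    by_cases hkm : k = m + 1
    · subst hkm
      rw [if_pos rfl]
      rw [Finset.sum_eq_single m (fun j _ hj => by rw [if_neg hj]; ring) (by intro h; exact absurd (Finset.self_mem_range_succ m) h)]
      rw [if_pos rfl, Nat.choose_succ_self_right]
      rw [pow_succ, Nat.factorial_succ]
      push_cast
      ring
    · rw [if_neg hkm]
      have hk' : k ≤ m := by omega
      rw [Finset.sum_eq_zero (fun j hj => by
        have : j ≠ m := by have := Finset.mem_range.1 hj; omega
        rw [if_neg this]; ring)]

lemma term_desc (b N n ℓ : ℕ) (hb : 0 < b) (hn : 0 < n) :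
    ((-1:ℝ)^ℓ * ((b:ℝ)/((ℓ:ℝ)+b)) * ((N-1).choose ℓ : ℝ) * ((b+N-1).choose b : ℝ)) * ((b+ℓ).descFactorial n : ℝ)
    = ((b:ℝ) * ((b+N-1).choose b : ℝ) * ((n-1)! : ℝ)) * ((-1:ℝ)^ℓ * ((N-1).choose ℓ : ℝ) * (((b-1)+ℓ).choose (n-1) : ℝ)) := by
  have h1 : (b+ℓ).descFactorial n = (b+ℓ) * (((b-1)+ℓ).descFactorial (n-1)) := by
    rw [show b+ℓ = ((b-1)+ℓ)+1 by omega, show n = (n-1)+1 by omega, Nat.succ_descFactorial_succ]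
    congr 1
  rw [h1, Nat.descFactorial_eq_factorial_mul_choose]
  have hne : (ℓ:ℝ) + (b:ℝ) ≠ 0 := by positivity
  push_cast
  field_simp
  ring

lemma term_pow (b N ℓ : ℕ) (hb : 0 < b) (hN : 0 < N) :
    ((-1:ℝ)^ℓ * ((b:ℝ)/((ℓ:ℝ)+b)) * ((N-1).choose ℓ : ℝ) * ((b+N-1).choose b : ℝ)) * ((b+ℓ:ℕ):ℝ)^N
    = ((b:ℝ) * ((b+N-1).choose b : ℝ)) * ((-1:ℝ)^ℓ * ((N-1).choose ℓ : ℝ) * ((b+ℓ:ℕ):ℝ)^(N-1)) := by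
  have hne : (ℓ:ℝ) + (b:ℝ) ≠ 0 := by positivity
  have hp : ((b+ℓ:ℕ):ℝ)^N = ((b+ℓ:ℕ):ℝ)^(N-1) * ((b+ℓ:ℕ):ℝ) := by
    rw [← pow_succ]
    congr 1
    omega
  rw [hp]
  push_cast
  field_simp
  ring

lemma arith3 (b N n : ℕ) (hb : 0 < b) (hN : 0 < N) (h1 : N ≤ n) (h2 : n ≤ b+N-1) :
    (b:ℝ) * ((b+N-1).choose b : ℝ) * ((n-1)! : ℝ) * ((b-1).choose (n-N) : ℝ)
    = ((n-1).choose (N-1) : ℝ) * ((b+N-1).descFactorial n : ℝ) := by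
  rw [Nat.descFactorial_eq_factorial_mul_choose]
  rw [Nat.cast_choose ℝ (show b ≤ b+N-1 by omega),
      Nat.cast_choose ℝ (show n-N ≤ b-1 by omega),
      Nat.cast_choose ℝ (show N-1 ≤ n-1 by omega)]
  push_cast [Nat.cast_choose ℝ (show n ≤ b+N-1 by omega)]
  rw [show b+N-1-b = N-1 by omega, show b-1-(n-N) = b+N-1-n by omega,
      show n-1-(N-1) = n-N by omega]
  have hbf : (b ! : ℝ) = b * ((b-1)! : ℝ) := by
    rw [show b = (b-1)+1 by omega, Nat.factorial_succ]
    push_cast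
    ring
  rw [hbf]
  have f0 : (b:ℝ) ≠ 0 := by positivity
  have f1 : (((N-1)!:ℕ) : ℝ) ≠ 0 := Nat.cast_ne_zero.2 (Nat.factorial_ne_zero _)
  have f2 : (((n-N)!:ℕ) : ℝ) ≠ 0 := Nat.cast_ne_zero.2 (Nat.factorial_ne_zero _)
  have f3 : (((b+N-1-n)!:ℕ) : ℝ) ≠ 0 := Nat.cast_ne_zero.2 (Nat.factorial_ne_zero _)
  have f4 : ((n !:ℕ) : ℝ) ≠ 0 := Nat.cast_ne_zero.2 (Nat.factorial_ne_zero _)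
  have f5 : (((b-1)!:ℕ) : ℝ) ≠ 0 := Nat.cast_ne_zero.2 (Nat.factorial_ne_zero _)
  field_simp

lemma arith4 (b N : ℕ) (hb : 0 < b) (hN : 0 < N) :
    (b:ℝ) * ((b+N-1).choose b : ℝ) * (((N-1)!:ℕ) : ℝ)
    = ((b+N-1)! : ℝ) / ((b-1)! : ℝ) := by
  rw [Nat.cast_choose ℝ (show b ≤ b+N-1 by omega), show b+N-1-b = N-1 by omega]
  have hbf : (b ! : ℝ) = b * ((b-1)! : ℝ) := by
    rw [show b = (b-1)+1 by omega, Nat.factorial_succ]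
    push_cast
    ring
  rw [hbf]
  have f0 : (b:ℝ) ≠ 0 := by positivity
  have f1 : (((N-1)!:ℕ) : ℝ) ≠ 0 := Nat.cast_ne_zero.2 (Nat.factorial_ne_zero _)
  have f5 : (((b-1)!:ℕ) : ℝ) ≠ 0 := Nat.cast_ne_zero.2 (Nat.factorial_ne_zero _)
  field_simp

/-- Factorial pseudo-moments of S_b^+: they vanish for 1 ≤ n ≤ N-1 and for n ≥ b+N,
equal (-1)^{N-1} C(n-1, N-1) (b+N-1)_n for N ≤ n ≤ b+N-1, and the N-th pseudo-moment
of S_b^+ equals (-1)^{N-1} (b+N-1)!/(b-1)!. -/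
theorem stmt17 (b N : ℕ) (hb : 0 < b) (hN : 0 < N) :
    (∀ n : ℕ, 1 ≤ n → n ≤ N - 1 →
        ∑ ℓ ∈ Finset.range N,
          ((-1 : ℝ) ^ ℓ * ((b : ℝ) / ((ℓ : ℝ) + b)) * ((N - 1).choose ℓ : ℝ) *
              ((b + N - 1).choose b : ℝ)) * ((b + ℓ).descFactorial n : ℝ) = 0) ∧
    (∀ n : ℕ, b + N ≤ n →
        ∑ ℓ ∈ Finset.range N,
          ((-1 : ℝ) ^ ℓ * ((b : ℝ) / ((ℓ : ℝ) + b)) * ((N - 1).choose ℓ : ℝ) *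
              ((b + N - 1).choose b : ℝ)) * ((b + ℓ).descFactorial n : ℝ) = 0) ∧
    (∀ n : ℕ, N ≤ n → n ≤ b + N - 1 →
        ∑ ℓ ∈ Finset.range N,
          ((-1 : ℝ) ^ ℓ * ((b : ℝ) / ((ℓ : ℝ) + b)) * ((N - 1).choose ℓ : ℝ) *
              ((b + N - 1).choose b : ℝ)) * ((b + ℓ).descFactorial n : ℝ) =
        (-1 : ℝ) ^ (N - 1) * ((n - 1).choose (N - 1) : ℝ) *
          ((b + N - 1).descFactorial n : ℝ)) ∧
    (∑ ℓ ∈ Finset.range N,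
        ((-1 : ℝ) ^ ℓ * ((b : ℝ) / ((ℓ : ℝ) + b)) * ((N - 1).choose ℓ : ℝ) *
            ((b + N - 1).choose b : ℝ)) * ((b + ℓ : ℕ) : ℝ) ^ N =
      (-1 : ℝ) ^ (N - 1) * ((b + N - 1)! : ℝ) / ((b - 1)! : ℝ)) := by
  have hrange : N = (N-1)+1 := by omega
  -- common reduction for the descFactorial sums
  have hmain : ∀ n : ℕ, 0 < n →
      ∑ ℓ ∈ Finset.range N,
          ((-1 : ℝ) ^ ℓ * ((b : ℝ) / ((ℓ : ℝ) + b)) * ((N - 1).choose ℓ : ℝ) *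
              ((b + N - 1).choose b : ℝ)) * ((b + ℓ).descFactorial n : ℝ)
      = ((b:ℝ) * ((b+N-1).choose b : ℝ) * ((n-1)! : ℝ)) *
          ((-1:ℝ)^(N-1) * (if N-1 ≤ n-1 then ((b-1).choose (n-1-(N-1)) : ℝ) else 0)) := by
    intro n hn
    rw [Finset.sum_congr rfl (fun ℓ _ => term_desc b N n ℓ hb hn), ← Finset.mul_sum]
    congr 1
    rw [hrange]
    exact keyL (b-1) (N-1) (n-1)
  refine ⟨?_, ?_, ?_, ?_⟩
  · intro n hn1 hn2
    rw [hmain n hn1]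
    rw [if_neg (by omega)]
    ring
  · intro n hn
    refine Finset.sum_eq_zero (fun ℓ hℓ => ?_)
    have hlt : b + ℓ < n := by
      have := Finset.mem_range.1 hℓ; omega
    rw [Nat.descFactorial_eq_zero_iff_lt.2 hlt]
    simp
  · intro n hn1 hn2
    rw [hmain n (by omega)]
    rw [if_pos (by omega), show n-1-(N-1) = n-N by omega]
    have := arith3 b N n hb hN hn1 hn2
    calc ((b:ℝ) * ((b+N-1).choose b : ℝ) * ((n-1)! : ℝ)) *
          ((-1:ℝ)^(N-1) * ((b-1).choose (n-N) : ℝ))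
        = ((b:ℝ) * ((b+N-1).choose b : ℝ) * ((n-1)! : ℝ) * ((b-1).choose (n-N) : ℝ)) * (-1:ℝ)^(N-1) := by ring
      _ = (((n-1).choose (N-1) : ℝ) * ((b+N-1).descFactorial n : ℝ)) * (-1:ℝ)^(N-1) := by rw [this]
      _ = _ := by ring
  · rw [Finset.sum_congr rfl (fun ℓ _ => term_pow b N ℓ hb hN), ← Finset.mul_sum]
    have hW : ∑ ℓ ∈ Finset.range N, (-1:ℝ)^ℓ * ((N-1).choose ℓ : ℝ) * ((b+ℓ:ℕ):ℝ)^(N-1)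
        = (-1:ℝ)^(N-1) * (((N-1)! : ℕ) : ℝ) := by
      have h := keyW (N-1) (N-1) b le_rfl
      rw [if_pos rfl] at h
      rw [hrange]
      exact h
    rw [hW]
    have := arith4 b N hb hN
    calc ((b:ℝ) * ((b+N-1).choose b : ℝ)) * ((-1:ℝ)^(N-1) * (((N-1)! : ℕ) : ℝ))
        = ((b:ℝ) * ((b+N-1).choose b : ℝ) * (((N-1)! : ℕ) : ℝ)) * (-1:ℝ)^(N-1) := by ring
      _ = (((b+N-1)! : ℝ) / ((b-1)! : ℝ)) * (-1:ℝ)^(N-1) := by rw [this]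
      _ = _ := by ring
end

section
/- Let b, N be positive integers and for a function f on {b,...,b+N-1} set E[f(S_b^+)] = b C(b+N-1,b) ∑_{ℓ=0}^{N-1} (-1)^ℓ C(N-1,ℓ) f(ℓ+b)/(ℓ+b). Then E[f(S_b^+)] = ∑_{j=0}^{N-1} (-1)^j C(j+b-1, b-1) (Δ⁺)^j f(b), where (Δ⁺)^j f(b) = ∑_{k=0}^{j} (-1)^{j+k} C(j,k) f(b+k) is the j-th iterated forward difference. In particular, taking f(i) = ζ^i gives E[ζ^{S_b^+}] = ζ^b ∑_{j=0}^{N-1} C(j+b-1, b-1)(1-ζ)^j. -/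
open Finset

lemma hockey (m N b' : ℕ) (h : b' ≤ m) :
    ∑ j ∈ Finset.range N, (j + b').choose m = (N + b').choose (m + 1) := by
  induction N with
  | zero => simp [Nat.choose_eq_zero_of_lt (by omega : b' < m + 1)]
  | succ n ih =>
    rw [Finset.sum_range_succ, ih]
    have e : n + 1 + b' = (n + b') + 1 := by omega
    rw [e, Nat.choose_succ_succ]
    simp only [Nat.succ_eq_add_one]
    omega

lemma term' (b' k j : ℕ) :
    (j + b').choose b' * j.choose k = (b' + k).choose k * (j + b').choose (b' + k) := by
  rcases le_or_gt k j with h | h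
  · have e1 : j + b' - j = b' := by omega
    have e2 : b' + k - k = b' := by omega
    have e3 : j + b' - k - b' = j - k := by omega
    have h1 := Nat.choose_symm (Nat.le_add_right j b')
    rw [e1] at h1
    have h2 := Nat.choose_mul (n := j + b') h
    have h3 := Nat.choose_mul (n := j + b') (Nat.le_add_left k b')
    rw [e2] at h3
    have h4 := Nat.choose_symm (show b' ≤ j + b' - k by omega)
    rw [e3] at h4
    rw [h1, h2, mul_comm ((b' + k).choose k), h3, h4]
  · rw [Nat.choose_eq_zero_of_lt h,
      Nat.choose_eq_zero_of_lt (show j + b' < b' + k by omega)]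
    simp

lemma sumlem (b' k N : ℕ) :
    ∑ j ∈ Finset.range N, (j + b').choose b' * j.choose k
      = (b' + k).choose k * (N + b').choose (b' + k + 1) := by
  calc ∑ j ∈ Finset.range N, (j + b').choose b' * j.choose k
      = ∑ j ∈ Finset.range N, (b' + k).choose k * (j + b').choose (b' + k) :=
        Finset.sum_congr rfl fun j _ => term' b' k j
    _ = (b' + k).choose k * ∑ j ∈ Finset.range N, (j + b').choose (b' + k) := by
        rw [Finset.mul_sum]
    _ = _ := by rw [hockey (b' + k) N b' (Nat.le_add_right _ _)]

lemma keyNat (b' k N : ℕ) (hk : k < N) :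
    (k + (b' + 1)) * ∑ j ∈ Finset.range N, (j + b').choose b' * j.choose k
      = (b' + 1) * (N + b').choose (b' + 1) * (N - 1).choose k := by
  rw [sumlem]
  have h1 : (b' + k).choose k = (b' + k).choose b' := by
    have h := Nat.choose_symm (Nat.le_add_right b' k)
    rwa [Nat.add_sub_cancel_left] at h
  have h2 := Nat.add_one_mul_choose_eq (b' + k) b'
  have h3 := Nat.choose_mul (n := N + b')
    (show b' + 1 ≤ b' + k + 1 by omega)
  have e1 : N + b' - (b' + 1) = N - 1 := by omega
  have e2 : b' + k + 1 - (b' + 1) = k := by omega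
  rw [e1, e2] at h3
  calc (k + (b' + 1)) * ((b' + k).choose k * (N + b').choose (b' + k + 1))
      = (Nat.succ (b' + k) * (b' + k).choose b') * (N + b').choose (b' + k + 1) := by
        rw [h1]; rw [Nat.succ_eq_add_one]; ring
    _ = ((b' + k + 1).choose (b' + 1) * (b' + 1)) * (N + b').choose (b' + k + 1) := by
        rw [h2]
    _ = (b' + 1) * ((N + b').choose (b' + k + 1) * (b' + k + 1).choose (b' + 1)) := by ring
    _ = (b' + 1) * ((N + b').choose (b' + 1) * (N - 1).choose k) := by rw [h3]
    _ = _ := by ring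

lemma coefC (b k N : ℕ) (hb : 0 < b) (hk : k < N) :
    ∑ j ∈ Finset.range N, ((j + b - 1).choose (b - 1) : ℂ) * (j.choose k : ℂ)
      = (b : ℂ) * ((b + N - 1).choose b : ℂ) * ((N - 1).choose k : ℂ) / ((k : ℂ) + b) := by
  obtain ⟨b', rfl⟩ : ∃ b', b = b' + 1 := ⟨b - 1, by omega⟩
  have e1 : ∀ j : ℕ, j + (b' + 1) - 1 = j + b' := fun j => by omega
  have e2 : b' + 1 + N - 1 = N + b' := by omega
  have e3 : (b' + 1 : ℕ) - 1 = b' := by omega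
  simp only [e1, e2, e3]
  have h := keyNat b' k N hk
  have hne : ((k : ℂ) + (b' + 1)) ≠ 0 := by
    have h0 : ((k + (b' + 1) : ℕ) : ℂ) ≠ 0 := Nat.cast_ne_zero.mpr (by omega)
    push_cast at h0
    convert h0 using 1
  have hc := congrArg (Nat.cast : ℕ → ℂ) h
  push_cast at hc
  push_cast
  field_simp
  linear_combination hc

/-- E[f(S_b^+)] = ∑_{j=0}^{N-1} (-1)^j C(j+b-1, b-1) (Δ⁺)^j f(b), and in particular
E[ζ^{S_b^+}] = ζ^b ∑_{j=0}^{N-1} C(j+b-1, b-1)(1-ζ)^j. -/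
theorem stmt18 (b N : ℕ) (hb : 0 < b) (hN : 0 < N) :
    (∀ f : ℕ → ℂ,
        (b : ℂ) * ((b + N - 1).choose b : ℂ) *
            ∑ ℓ ∈ Finset.range N,
              (-1 : ℂ) ^ ℓ * ((N - 1).choose ℓ : ℂ) * f (ℓ + b) / ((ℓ : ℂ) + b) =
        ∑ j ∈ Finset.range N,
          (-1 : ℂ) ^ j * ((j + b - 1).choose (b - 1) : ℂ) *
            ∑ k ∈ Finset.range (j + 1), (-1 : ℂ) ^ (j + k) * (j.choose k : ℂ) * f (b + k)) ∧
    (∀ ζ : ℂ,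
        (b : ℂ) * ((b + N - 1).choose b : ℂ) *
            ∑ ℓ ∈ Finset.range N,
              (-1 : ℂ) ^ ℓ * ((N - 1).choose ℓ : ℂ) * ζ ^ (ℓ + b) / ((ℓ : ℂ) + b) =
        ζ ^ b * ∑ j ∈ Finset.range N, ((j + b - 1).choose (b - 1) : ℂ) * (1 - ζ) ^ j) := by
  have key : ∀ f : ℕ → ℂ,
      (b : ℂ) * ((b + N - 1).choose b : ℂ) *
          ∑ ℓ ∈ Finset.range N,
            (-1 : ℂ) ^ ℓ * ((N - 1).choose ℓ : ℂ) * f (ℓ + b) / ((ℓ : ℂ) + b) =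
      ∑ j ∈ Finset.range N,
        (-1 : ℂ) ^ j * ((j + b - 1).choose (b - 1) : ℂ) *
          ∑ k ∈ Finset.range (j + 1), (-1 : ℂ) ^ (j + k) * (j.choose k : ℂ) * f (b + k) := by
    intro f
    have hL : (b : ℂ) * ((b + N - 1).choose b : ℂ) *
          ∑ ℓ ∈ Finset.range N,
            (-1 : ℂ) ^ ℓ * ((N - 1).choose ℓ : ℂ) * f (ℓ + b) / ((ℓ : ℂ) + b)
        = ∑ k ∈ Finset.range N,
            ((-1 : ℂ) ^ k * ((b : ℂ) * ((b + N - 1).choose b : ℂ) *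
              ((N - 1).choose k : ℂ) / ((k : ℂ) + b))) * f (b + k) := by
      rw [Finset.mul_sum]
      refine Finset.sum_congr rfl fun k _ => ?_
      rw [Nat.add_comm k b]
      ring
    have hR : (∑ j ∈ Finset.range N,
          (-1 : ℂ) ^ j * ((j + b - 1).choose (b - 1) : ℂ) *
            ∑ k ∈ Finset.range (j + 1), (-1 : ℂ) ^ (j + k) * (j.choose k : ℂ) * f (b + k))
        = ∑ k ∈ Finset.range N,
            ((-1 : ℂ) ^ k * ∑ j ∈ Finset.range N,
              ((j + b - 1).choose (b - 1) : ℂ) * (j.choose k : ℂ)) * f (b + k) := by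
      calc (∑ j ∈ Finset.range N,
            (-1 : ℂ) ^ j * ((j + b - 1).choose (b - 1) : ℂ) *
              ∑ k ∈ Finset.range (j + 1), (-1 : ℂ) ^ (j + k) * (j.choose k : ℂ) * f (b + k))
          = ∑ j ∈ Finset.range N, ∑ k ∈ Finset.range N,
              (-1 : ℂ) ^ j * ((j + b - 1).choose (b - 1) : ℂ) *
                ((-1 : ℂ) ^ (j + k) * (j.choose k : ℂ) * f (b + k)) := by
            refine Finset.sum_congr rfl fun j hj => ?_
            simp only [Finset.mem_range] at hj
            rw [Finset.mul_sum]
            apply Finset.sum_subset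
            · intro x hx
              simp only [Finset.mem_range] at *
              omega
            · intro x _ hnx
              simp only [Finset.mem_range, not_lt] at hnx
              rw [Nat.choose_eq_zero_of_lt (by omega : j < x)]
              simp
        _ = ∑ k ∈ Finset.range N, ∑ j ∈ Finset.range N,
              (-1 : ℂ) ^ j * ((j + b - 1).choose (b - 1) : ℂ) *
                ((-1 : ℂ) ^ (j + k) * (j.choose k : ℂ) * f (b + k)) := Finset.sum_comm
        _ = _ := by
            refine Finset.sum_congr rfl fun k _ => ?_
            rw [Finset.mul_sum, Finset.sum_mul]
            refine Finset.sum_congr rfl fun j _ => ?_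
            have hsign : (-1 : ℂ) ^ j * (-1 : ℂ) ^ (j + k) = (-1 : ℂ) ^ k := by
              rw [← pow_add]
              have e : j + (j + k) = 2 * j + k := by omega
              rw [e, pow_add, pow_mul, neg_one_sq, one_pow, one_mul]
            linear_combination (((j + b - 1).choose (b - 1) : ℂ) * (j.choose k : ℂ) *
              f (b + k)) * hsign
    rw [hL, hR]
    refine Finset.sum_congr rfl fun k hk => ?_
    rw [coefC b k N hb (Finset.mem_range.mp hk)]
  refine ⟨key, fun ζ => ?_⟩
  have h2 := key (fun i => ζ ^ i)
  rw [h2, Finset.mul_sum]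
  refine Finset.sum_congr rfl fun j _ => ?_
  have hinner : ∑ k ∈ Finset.range (j + 1),
      (-1 : ℂ) ^ (j + k) * (j.choose k : ℂ) * ζ ^ (b + k) = ζ ^ b * (ζ + (-1)) ^ j := by
    rw [add_pow, Finset.mul_sum]
    refine Finset.sum_congr rfl fun k hk => ?_
    simp only [Finset.mem_range] at hk
    have hsign : (-1 : ℂ) ^ (j + k) = (-1 : ℂ) ^ (j - k) := by
      have e : j + k = (j - k) + 2 * k := by omega
      rw [e, pow_add, pow_mul, neg_one_sq, one_pow, mul_one]
    rw [hsign, pow_add]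
    ring
  rw [hinner]
  have e : (1 - ζ) ^ j = (-1 : ℂ) ^ j * (ζ + (-1)) ^ j := by
    rw [← neg_pow]
    ring_nf
  rw [e]
  ring
end

section
/- Let N ≥ 1 and a < 0 < b be integers, and set K = ((-1)^N/N!)·a(a-1)⋯(a-N+1)·b(b+1)⋯(b+N-1) = C(N-a-1,N)·C(N+b-1,N). Define the signed weights on {a-N+1,...,a} ∪ {b,...,b+N-1} by P{S_{ab} = a-ℓ} = (-1)^ℓ (KN/(ℓ-a)) C(N-1,ℓ)/C(ℓ+b-a+N-1, N) and P{S_{ab} = b+ℓ} = (-1)^ℓ (KN/(ℓ+b)) C(N-1,ℓ)/C(ℓ+b-a+N-1, N) for 0 ≤ ℓ ≤ N-1. Then these 2N weights sum to 1, i.e. KN² ∫_0^1∫_0^1 u^{-a-1}(1-u)^{N-1} v^{b-1}(1-v)^{N-1} du dv = 1. -/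
open Finset MeasureTheory intervalIntegral


lemma contpoly (m k : ℕ) :
    IntervalIntegrable (fun x : ℝ => x ^ m * (1 - x) ^ k) volume 0 1 := by
  apply Continuous.intervalIntegrable
  fun_prop

lemma beta_nat (n : ℕ) : ∀ m : ℕ, ∫ x in (0:ℝ)..1, x ^ m * (1 - x) ^ n
    = (m.factorial * n.factorial : ℝ) / ((m + n + 1).factorial) := by
  induction n with
  | zero =>
      intro m
      simp only [pow_zero, mul_one]
      rw [integral_pow]
      have h : ((m + 0 + 1).factorial : ℝ) = (m + 1) * m.factorial := by
        norm_num [Nat.factorial_succ]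
      rw [h]
      have h1 : (m.factorial : ℝ) ≠ 0 := Nat.cast_ne_zero.mpr m.factorial_ne_zero
      have h2 : ((m : ℝ) + 1) ≠ 0 := by positivity
      field_simp
      simp
  | succ k ih =>
      intro m
      have h : ∀ x : ℝ, x ^ m * (1 - x) ^ (k+1)
          = x ^ m * (1-x)^k - x^(m+1) * (1-x)^k := by intro x; ring
      simp_rw [h]
      rw [intervalIntegral.integral_sub (contpoly m k) (contpoly (m+1) k), ih m, ih (m+1)]
      have e1 : ((m + 1 + k + 1).factorial : ℝ) = (m+k+2) * (m+k+1).factorial := by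
        have : m + 1 + k + 1 = (m+k+1) + 1 := by ring
        rw [this, Nat.factorial_succ]; push_cast; ring
      have e2 : ((m + (k+1) + 1).factorial : ℝ) = (m+k+2) * (m+k+1).factorial := by
        have : m + (k+1) + 1 = (m+k+1) + 1 := by ring
        rw [this, Nat.factorial_succ]; push_cast; ring
      have e3 : (((k+1) : ℕ).factorial : ℝ) = (k+1) * k.factorial := by
        rw [Nat.factorial_succ]; push_cast; ring
      have e4 : (((m+1) : ℕ).factorial : ℝ) = (m+1) * m.factorial := by
        rw [Nat.factorial_succ]; push_cast; ring
      rw [e1, e2, e3, e4]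
      have h1 : ((m+k+1).factorial : ℝ) ≠ 0 := Nat.cast_ne_zero.mpr (Nat.factorial_ne_zero _)
      have h2 : ((m : ℝ) + k + 2) ≠ 0 := by positivity
      field_simp
      ring

noncomputable def Fp (n α : ℕ) (u : ℝ) : ℝ :=
  ∑ ℓ ∈ Finset.range (n+1), (-1:ℝ)^ℓ * (n.choose ℓ : ℝ) * u ^ (α+ℓ+1) / ((α:ℝ)+ℓ+1)

lemma Fp_cont (n α : ℕ) : Continuous (Fp n α) := by
  apply continuous_finset_sum
  intro i _
  fun_prop

lemma Fp_zero (n α : ℕ) : Fp n α 0 = 0 := by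
  simp [Fp]

lemma Fp_deriv (n α : ℕ) (u : ℝ) : HasDerivAt (Fp n α) (u^α * (1-u)^n) u := by
  have h : HasDerivAt (Fp n α)
      (∑ ℓ ∈ Finset.range (n+1), (-1:ℝ)^ℓ * (n.choose ℓ : ℝ) * u ^ (α+ℓ)) u := by
    apply HasDerivAt.fun_sum
    intro ℓ _
    have h1 : HasDerivAt (fun u : ℝ => u ^ (α+ℓ+1)) ((α+ℓ+1) * u ^ (α+ℓ)) u := by
      have := hasDerivAt_pow (α+ℓ+1) u
      simpa using this
    have h2 := (h1.const_mul ((-1:ℝ)^ℓ * (n.choose ℓ : ℝ))).div_const ((α:ℝ)+ℓ+1)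
    convert h2 using 1
    · rfl
    have hd : ((α:ℝ)+ℓ+1) ≠ 0 := by positivity
    field_simp
  convert h using 1
  have : (1 - u) ^ n = ∑ ℓ ∈ Finset.range (n+1), (-u)^ℓ * 1^(n-ℓ) * (n.choose ℓ : ℝ) := by
    rw [← add_pow]; ring_nf
  rw [show u^α * (1-u)^n = (1-u)^n * u^α by ring, this, Finset.sum_mul]
  apply Finset.sum_congr rfl
  intro ℓ _
  rw [neg_pow]
  ring

lemma Fp_one (n α : ℕ) : Fp n α 1 = (α.factorial * n.factorial : ℝ)/((α+n+1).factorial) := by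
  have h := intervalIntegral.integral_eq_sub_of_hasDerivAt
    (f := Fp n α) (f' := fun u : ℝ => u^α * (1-u)^n)
    (fun u _ => Fp_deriv n α u) (contpoly α n)
  rw [Fp_zero, sub_zero] at h
  rw [← h, beta_nat]

lemma key_s19 (n γ : ℕ) : (((n+γ+1).choose (n+1) : ℕ) : ℝ) * ((n:ℝ)+1)
    * ((γ.factorial * n.factorial : ℝ) / ((γ+n+1).factorial)) = 1 := by
  have h := Nat.choose_mul_factorial_mul_factorial (show n+1 ≤ n+γ+1 by omega)
  have h2 : n+γ+1-(n+1) = γ := by omega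
  rw [h2, Nat.factorial_succ] at h
  have h3 : γ + n + 1 = n + γ + 1 := by omega
  rw [h3]
  have hf : (((n+γ+1).factorial : ℕ) : ℝ) ≠ 0 := Nat.cast_ne_zero.mpr (Nat.factorial_ne_zero _)
  have h' : (((n+γ+1).choose (n+1) : ℕ) : ℝ) * (((n:ℝ)+1) * n.factorial) * γ.factorial
      = (n+γ+1).factorial := by exact_mod_cast congrArg (Nat.cast : ℕ → ℝ) h
  field_simp
  linear_combination h'

lemma S_lemma (n α β : ℕ) : (∫ u in (0:ℝ)..1, u^β * (1-u)^n * Fp n α u)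
    = ∑ ℓ ∈ Finset.range (n+1), (-1:ℝ)^ℓ * (n.choose ℓ : ℝ) / ((α:ℝ)+ℓ+1)
        * ((α+β+ℓ+1).factorial * n.factorial / ((α+β+ℓ+n+2).factorial)) := by
  have h : ∀ u : ℝ, u^β*(1-u)^n * Fp n α u
      = ∑ ℓ ∈ Finset.range (n+1),
          (-1:ℝ)^ℓ * (n.choose ℓ : ℝ) / ((α:ℝ)+ℓ+1) * (u^(α+β+ℓ+1) * (1-u)^n) := by
    intro u
    rw [Fp, Finset.mul_sum]
    apply Finset.sum_congr rfl
    intro ℓ _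
    rw [show α+β+ℓ+1 = β + (α+ℓ+1) by ring, pow_add]
    ring
  simp_rw [h]
  rw [intervalIntegral.integral_finset_sum]
  · apply Finset.sum_congr rfl
    intro ℓ _
    rw [intervalIntegral.integral_const_mul, beta_nat]
    have : α+β+ℓ+1+n+1 = α+β+ℓ+n+2 := by omega
    rw [this]
  · intro ℓ _
    exact (contpoly (α+β+ℓ+1) n).const_mul _

lemma FTC_prod (n α β : ℕ) :
    (∫ u in (0:ℝ)..1, u^β*(1-u)^n * Fp n α u) + (∫ u in (0:ℝ)..1, u^α*(1-u)^n * Fp n β u)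
      = Fp n α 1 * Fp n β 1 := by
  have h : ∀ u : ℝ, HasDerivAt (fun u => Fp n α u * Fp n β u)
      (u^α*(1-u)^n * Fp n β u + Fp n α u * (u^β*(1-u)^n)) u :=
    fun u => (Fp_deriv n α u).mul (Fp_deriv n β u)
  have hcont : Continuous fun u : ℝ => u^α*(1-u)^n * Fp n β u + Fp n α u * (u^β*(1-u)^n) := by
    apply Continuous.add
    · exact (by fun_prop : Continuous fun u:ℝ => u^α*(1-u)^n).mul (Fp_cont n β)
    · exact (Fp_cont n α).mul (by fun_prop)
  have hint := intervalIntegral.integral_eq_sub_of_hasDerivAt (fun u _ => h u)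
    (hcont.intervalIntegrable 0 1)
  rw [Fp_zero, mul_comm, Fp_zero, mul_comm, zero_mul, sub_zero] at hint
  rw [← hint, intervalIntegral.integral_add]
  · rw [add_comm]
    congr 1
    apply intervalIntegral.integral_congr
    intro u _
    ring
  · exact ((by fun_prop : Continuous fun u:ℝ => u^α*(1-u)^n).mul (Fp_cont n β)).intervalIntegrable 0 1
  · exact ((Fp_cont n α).mul (by fun_prop : Continuous fun u:ℝ => u^β*(1-u)^n)).intervalIntegrable 0 1

lemma final (n α β : ℕ) :
    (((n+α+1).choose (n+1) : ℕ) : ℝ) * (((n+β+1).choose (n+1) : ℕ) : ℝ) * ((n:ℝ)+1)^2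
      * ((α.factorial * n.factorial / ((α+n+1).factorial))
          * (β.factorial * n.factorial / ((β+n+1).factorial))) = 1 := by
  have k1 := key_s19 n α
  have k2 := key_s19 n β
  linear_combination ((((n+β+1).choose (n+1) : ℕ) : ℝ) * ((n:ℝ)+1)
    * ((β.factorial * n.factorial : ℝ) / ((β+n+1).factorial))) * k1 + k2

set_option maxHeartbeats 1600000

/-- K = C(N-a-1, N) C(N+b-1, N). -/
noncomputable def Kconst (N : ℕ) (a b : ℤ) : ℝ :=
  (((N : ℤ) - a - 1).toNat.choose N : ℝ) * (((N : ℤ) + b - 1).toNat.choose N : ℝ)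

/-- The 2N exit pseudo-probabilities of the interval (a,b) sum to 1, i.e.
K N² ∫_0^1 ∫_0^1 u^{-a-1}(1-u)^{N-1} v^{b-1}(1-v)^{N-1} du dv = 1. -/
theorem stmt19 (N : ℕ) (hN : 1 ≤ N) (a b : ℤ) (ha : a < 0) (hb : 0 < b) :
    (∑ ℓ ∈ Finset.range N,
        ((-1 : ℝ) ^ ℓ * (Kconst N a b * N / ((ℓ : ℝ) - (a : ℝ))) * ((N - 1).choose ℓ : ℝ) /
            ((((ℓ : ℤ) + b - a + N - 1).toNat.choose N : ℝ)) +
          (-1 : ℝ) ^ ℓ * (Kconst N a b * N / ((ℓ : ℝ) + (b : ℝ))) * ((N - 1).choose ℓ : ℝ) /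
            ((((ℓ : ℤ) + b - a + N - 1).toNat.choose N : ℝ))) = 1) ∧
    Kconst N a b * N ^ 2 *
        ∫ u in (0 : ℝ)..1, ∫ v in (0 : ℝ)..1,
          u ^ ((-a - 1).toNat) * (1 - u) ^ (N - 1) * v ^ ((b - 1).toNat) * (1 - v) ^ (N - 1) = 1 := by
  obtain ⟨n, rfl⟩ : ∃ n, N = n + 1 := ⟨N-1, (Nat.succ_pred_eq_of_pos hN).symm⟩
  obtain ⟨α, rfl⟩ : ∃ α : ℕ, a = -((α:ℤ)+1) := ⟨(-a-1).toNat, by omega⟩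
  obtain ⟨β, rfl⟩ : ∃ β : ℕ, b = (β:ℤ)+1 := ⟨(b-1).toNat, by omega⟩
  have e1 : (((n+1:ℕ):ℤ) - (-((α:ℤ)+1)) - 1).toNat = n+α+1 := by omega
  have e2 : (((n+1:ℕ):ℤ) + ((β:ℤ)+1) - 1).toNat = n+β+1 := by omega
  have hK : Kconst (n+1) (-((α:ℤ)+1)) ((β:ℤ)+1)
      = (((n+α+1).choose (n+1) : ℕ) : ℝ) * (((n+β+1).choose (n+1) : ℕ) : ℝ) := by
    unfold Kconst
    rw [e1, e2]
  constructor
  · have hsum : ∀ ℓ ∈ Finset.range (n+1),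
        ((-1 : ℝ) ^ ℓ * (Kconst (n+1) (-((α:ℤ)+1)) ((β:ℤ)+1) * ((n+1:ℕ):ℝ) /
              ((ℓ : ℝ) - ((-((α:ℤ)+1) : ℤ) : ℝ))) * (((n+1-1).choose ℓ : ℕ) : ℝ) /
            ((((ℓ : ℤ) + ((β:ℤ)+1) - (-((α:ℤ)+1)) + ((n+1:ℕ):ℤ) - 1).toNat.choose (n+1) : ℕ) : ℝ) +
          (-1 : ℝ) ^ ℓ * (Kconst (n+1) (-((α:ℤ)+1)) ((β:ℤ)+1) * ((n+1:ℕ):ℝ) /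
              ((ℓ : ℝ) + ((((β:ℤ)+1) : ℤ) : ℝ))) * (((n+1-1).choose ℓ : ℕ) : ℝ) /
            ((((ℓ : ℤ) + ((β:ℤ)+1) - (-((α:ℤ)+1)) + ((n+1:ℕ):ℤ) - 1).toNat.choose (n+1) : ℕ) : ℝ))
        = (((n+α+1).choose (n+1) : ℕ) : ℝ) * (((n+β+1).choose (n+1) : ℕ) : ℝ) * ((n:ℝ)+1)^2 *
            ((-1:ℝ)^ℓ * (n.choose ℓ : ℝ) / ((α:ℝ)+ℓ+1)
                * ((α+β+ℓ+1).factorial * n.factorial / ((α+β+ℓ+n+2).factorial))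
              + (-1:ℝ)^ℓ * (n.choose ℓ : ℝ) / ((β:ℝ)+ℓ+1)
                * ((β+α+ℓ+1).factorial * n.factorial / ((β+α+ℓ+n+2).factorial))) := by
      intro ℓ _
      have e3 : ((ℓ : ℤ) + ((β:ℤ)+1) - (-((α:ℤ)+1)) + ((n+1:ℕ):ℤ) - 1).toNat
          = ℓ+α+β+n+2 := by omega
      have k1 := key_s19 n (α+β+ℓ+1)
      rw [show n+(α+β+ℓ+1)+1 = ℓ+α+β+n+2 by omega,
        show α+β+ℓ+1+n+1 = α+β+ℓ+n+2 by omega] at k1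
      have k2 := key_s19 n (β+α+ℓ+1)
      rw [show n+(β+α+ℓ+1)+1 = ℓ+α+β+n+2 by omega,
        show β+α+ℓ+1+n+1 = β+α+ℓ+n+2 by omega] at k2
      have rA := eq_one_div_of_mul_eq_one_right (by linear_combination k1 :
        ((((ℓ+α+β+n+2).choose (n+1) : ℕ) : ℝ) * ((n:ℝ)+1))
          * (((α+β+ℓ+1).factorial * n.factorial : ℝ) / ((α+β+ℓ+n+2).factorial)) = 1)
      have rB := eq_one_div_of_mul_eq_one_right (by linear_combination k2 :
        ((((ℓ+α+β+n+2).choose (n+1) : ℕ) : ℝ) * ((n:ℝ)+1))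
          * (((β+α+ℓ+1).factorial * n.factorial : ℝ) / ((β+α+ℓ+n+2).factorial)) = 1)
      have hC : (0:ℝ) < (((ℓ+α+β+n+2).choose (n+1) : ℕ) : ℝ) := by
        exact_mod_cast Nat.choose_pos (by omega)
      have hC' : (((ℓ+α+β+n+2).choose (n+1) : ℕ) : ℝ) ≠ 0 := ne_of_gt hC
      have hn1 : ((n:ℝ)+1) ≠ 0 := by positivity
      have hd1 : ((ℓ:ℝ) - ((-((α:ℤ)+1) : ℤ) : ℝ)) = (ℓ:ℝ)+(α:ℝ)+1 := by push_cast; ring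
      have hd2 : ((ℓ:ℝ) + ((((β:ℤ)+1) : ℤ) : ℝ)) = (ℓ:ℝ)+(β:ℝ)+1 := by push_cast; ring
      have c1 : ((n+1:ℕ):ℝ) = (n:ℝ)+1 := by push_cast; ring
      have d1 : ((ℓ:ℝ) + (α:ℝ) + 1) ≠ 0 := by positivity
      have d2 : ((ℓ:ℝ) + (β:ℝ) + 1) ≠ 0 := by positivity
      rw [hK, e3, Nat.add_sub_cancel, hd1, hd2, c1, rA, rB]
      field_simp
      ring
    rw [Finset.sum_congr rfl hsum, ← Finset.mul_sum, Finset.sum_add_distrib,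
      ← S_lemma n α β, ← S_lemma n β α, FTC_prod, Fp_one, Fp_one]
    push_cast
    linear_combination final n α β
  · have e4 : (-(-((α:ℤ)+1)) - 1).toNat = α := by omega
    have e5 : ((((β:ℤ)+1) : ℤ) - 1).toNat = β := by omega
    rw [hK]
    simp only [e4, e5, Nat.add_sub_cancel]
    have h1 : ∀ u : ℝ, (∫ v in (0:ℝ)..1, u^α*(1-u)^n*v^β*(1-v)^n)
        = (u^α*(1-u)^n) * ((β.factorial * n.factorial : ℝ)/((β+n+1).factorial)) := by
      intro u
      rw [show (∫ v in (0:ℝ)..1, u^α*(1-u)^n*v^β*(1-v)^n)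
          = ∫ v in (0:ℝ)..1, (u^α*(1-u)^n) * (v^β*(1-v)^n) from
          intervalIntegral.integral_congr (fun v _ => by ring),
        intervalIntegral.integral_const_mul, beta_nat]
    simp_rw [h1]
    rw [intervalIntegral.integral_mul_const, beta_nat]
    push_cast
    linear_combination final n α β
end
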